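/- arXiv:1710.09576 — 11 statements merged into one kernel-verified Lean document; each statement's English description precedes it below -/
import Mathlib

section
/- For complex numbers s, p, the pair (s,p) lies in the symmetrized bidisc G₂ if and only if |s - s̄·p| < 1 - |p|². -/
open Complex ComplexConjugate

def G2 : Set (ℂ × ℂ) :=
  {w | ∃ z₁ z₂ : ℂ, ‖z₁‖ < 1 ∧ ‖z₂‖ < 1 ∧ w = (z₁ + z₂, z₁ * z₂)}

/-- Key algebraic identity:
`s - s̄ p = z₁(1-|z₂|²) + z₂(1-|z₁|²)` when `s = z₁+z₂`, `p = z₁z₂`. -/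
lemma key_identity (z₁ z₂ : ℂ) :
    (z₁ + z₂) - conj (z₁ + z₂) * (z₁ * z₂) =
      z₁ * (1 - ((‖z₂‖ : ℝ) : ℂ) ^ 2) +
      z₂ * (1 - ((‖z₁‖ : ℝ) : ℂ) ^ 2) := by
  have h1 : ((‖z₁‖ : ℝ) : ℂ) ^ 2 = z₁ * conj z₁ := by
    rw [Complex.mul_conj]
    norm_cast
    exact Complex.sq_norm z₁
  have h2 : ((‖z₂‖ : ℝ) : ℂ) ^ 2 = z₂ * conj z₂ := by
    rw [Complex.mul_conj]
    norm_cast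
    exact Complex.sq_norm z₂
  rw [h1, h2, map_add]
  ring

lemma abs_one_sub_sq (r : ℝ) : ‖1 - (r : ℂ) ^ 2‖ = |1 - r ^ 2| := by
  have : (1 - (r : ℂ) ^ 2) = ((1 - r ^ 2 : ℝ) : ℂ) := by push_cast; ring
  rw [this, Complex.norm_real, Real.norm_eq_abs]

/-- If one root has modulus `≥ 1` (and `|p| < 1`), the inequality fails. -/
lemma aux_ge (z₁ z₂ : ℂ) (h1 : 1 ≤ ‖z₁‖)
    (hp : ‖z₁ * z₂‖ < 1) :
    1 - ‖z₁ * z₂‖ ^ 2 ≤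
      ‖(z₁ + z₂) - conj (z₁ + z₂) * (z₁ * z₂)‖ := by
  set a := ‖z₁‖ with ha
  set b := ‖z₂‖ with hb
  have hb0 : 0 ≤ b := norm_nonneg z₂
  have hab : a * b < 1 := by rwa [norm_mul] at hp
  have hblt : b < 1 := by nlinarith
  have habs2 : ‖z₂ * (1 - ((a : ℝ) : ℂ) ^ 2)‖ = b * (a ^ 2 - 1) := by
    rw [norm_mul, abs_one_sub_sq, abs_of_nonpos (by nlinarith)]
    ring
  have habs1 : ‖z₁ * (1 - ((b : ℝ) : ℂ) ^ 2)‖ = a * (1 - b ^ 2) := by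
    rw [norm_mul, abs_one_sub_sq, _root_.abs_of_nonneg (by nlinarith : (0:ℝ) ≤ 1 - b ^ 2)]
  have hmain : a * (1 - b ^ 2) - b * (a ^ 2 - 1) ≤
      ‖(z₁ + z₂) - conj (z₁ + z₂) * (z₁ * z₂)‖ := by
    rw [key_identity]
    calc a * (1 - b ^ 2) - b * (a ^ 2 - 1)
        = ‖z₁ * (1 - ((b : ℝ) : ℂ) ^ 2)‖ -
          ‖z₂ * (1 - ((a : ℝ) : ℂ) ^ 2)‖ := by rw [habs1, habs2]
      _ ≤ _ := by
          set X := z₁ * (1 - ((b : ℝ) : ℂ) ^ 2)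
          set Y := z₂ * (1 - ((a : ℝ) : ℂ) ^ 2)
          have htri : ‖X‖ ≤ ‖X + Y‖ + ‖Y‖ := by
            have := norm_add_le (X + Y) (-Y)
            simpa using this
          linarith
  have hfact : 1 - (a * b) ^ 2 ≤ a * (1 - b ^ 2) - b * (a ^ 2 - 1) := by
    nlinarith [mul_nonneg (mul_nonneg (sub_nonneg.2 h1) (sub_nonneg.2 hblt.le))
      (sub_nonneg.2 hab.le)]
  rw [norm_mul]
  linarith

theorem stmt_0 (s p : ℂ) :
    (s, p) ∈ G2 ↔ ‖s - conj s * p‖ < 1 - ‖p‖ ^ 2 := by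
  constructor
  · rintro ⟨z₁, z₂, h1, h2, heq⟩
    obtain ⟨hs, hp⟩ := Prod.ext_iff.1 heq
    subst hs; subst hp
    set a := ‖z₁‖ with ha
    set b := ‖z₂‖ with hb
    have ha0 : 0 ≤ a := norm_nonneg z₁
    have hb0 : 0 ≤ b := norm_nonneg z₂
    have habs1 : ‖z₁ * (1 - ((b : ℝ) : ℂ) ^ 2)‖ = a * (1 - b ^ 2) := by
      rw [norm_mul, abs_one_sub_sq, _root_.abs_of_nonneg (by nlinarith : (0:ℝ) ≤ 1 - b ^ 2)]
    have habs2 : ‖z₂ * (1 - ((a : ℝ) : ℂ) ^ 2)‖ = b * (1 - a ^ 2) := by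
      rw [norm_mul, abs_one_sub_sq, _root_.abs_of_nonneg (by nlinarith : (0:ℝ) ≤ 1 - a ^ 2)]
    have hps : ‖z₁ * z₂‖ ^ 2 = (a * b) ^ 2 := by rw [norm_mul]
    rw [hps]
    calc ‖(z₁ + z₂) - conj (z₁ + z₂) * (z₁ * z₂)‖
        = ‖z₁ * (1 - ((b : ℝ) : ℂ) ^ 2) + z₂ * (1 - ((a : ℝ) : ℂ) ^ 2)‖ := by
          rw [key_identity]
      _ ≤ a * (1 - b ^ 2) + b * (1 - a ^ 2) := by
          have := norm_add_le (z₁ * (1 - ((b : ℝ) : ℂ) ^ 2))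
            (z₂ * (1 - ((a : ℝ) : ℂ) ^ 2))
          rw [habs1, habs2] at this
          exact this
      _ < 1 - (a * b) ^ 2 := by
          nlinarith [mul_pos (mul_pos (sub_pos.2 h1) (sub_pos.2 h2))
            (sub_pos.2 (show a * b < 1 by nlinarith))]
  · intro h
    have habs0 : 0 ≤ ‖s - conj s * p‖ := norm_nonneg _
    have hp1 : ‖p‖ < 1 := by
      nlinarith [norm_nonneg p]
    obtain ⟨d, hd⟩ := IsAlgClosed.exists_pow_nat_eq (s ^ 2 / 4 - p) (n := 2) (by norm_num)
    set z₁ := s / 2 + d with hz₁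
    set z₂ := s / 2 - d with hz₂
    have hsum : z₁ + z₂ = s := by rw [hz₁, hz₂]; ring
    have hprod : z₁ * z₂ = p := by rw [hz₁, hz₂]; linear_combination -hd
    have hpp : ‖z₁ * z₂‖ < 1 := by rw [hprod]; exact hp1
    have hc1 : ‖z₁‖ < 1 := by
      by_contra hcon
      push_neg at hcon
      have := aux_ge z₁ z₂ hcon hpp
      rw [hsum, hprod] at this
      linarith
    have hc2 : ‖z₂‖ < 1 := by
      by_contra hcon
      push_neg at hcon
      have hpp' : ‖z₂ * z₁‖ < 1 := by rwa [mul_comm]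
      have := aux_ge z₂ z₁ hcon hpp'
      rw [add_comm, mul_comm, hsum, hprod] at this
      linarith
    exact ⟨z₁, z₂, hc1, hc2, by rw [hsum, hprod]⟩
end

section
/- For complex numbers s, p, the pair (s,p) lies in the symmetrized bidisc G₂ if and only if |s| < 2 and for all ω on the unit circle, |(2p - ωs)/(2 - ω̄ s)| < 1. -/
open Complex ComplexConjugate

lemma diff_normSq (ω s p : ℂ) :
    Complex.normSq (2 - conj ω * s) - Complex.normSq (2 * p - ω * s)
      = 4 * (1 - Complex.normSq p - (conj ω * (s - conj s * p)).re) := by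
  simp only [Complex.normSq_apply, Complex.mul_re, Complex.mul_im, Complex.sub_re,
    Complex.sub_im, Complex.conj_re, Complex.conj_im, Complex.re_ofNat, Complex.im_ofNat]
  ring

lemma abs_cond_iff (s p ω : ℂ) (hs : ‖s‖ < 2) (hω : ‖ω‖ = 1) :
    ‖(2 * p - ω * s) / (2 - conj ω * s)‖ < 1 ↔
      (conj ω * (s - conj s * p)).re < 1 - Complex.normSq p := by
  have hd : 2 - conj ω * s ≠ 0 := by
    intro h
    have h2 : (2 : ℂ) = conj ω * s := by linear_combination h
    have : (2 : ℝ) = ‖s‖ := by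
      have := congrArg (‖·‖) h2
      simpa [norm_mul, Complex.norm_conj, hω] using this
    linarith
  have hdpos : 0 < ‖2 - conj ω * s‖ := norm_pos_iff.mpr hd
  rw [norm_div, div_lt_one hdpos]
  constructor
  · intro h
    have h2 : Complex.normSq (2 * p - ω * s) < Complex.normSq (2 - conj ω * s) := by
      rw [← Complex.sq_norm, ← Complex.sq_norm]
      exact pow_lt_pow_left₀ h (norm_nonneg _) (by norm_num)
    have := diff_normSq ω s p
    nlinarith
  · intro h
    have h2 : Complex.normSq (2 * p - ω * s) < Complex.normSq (2 - conj ω * s) := by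
      have := diff_normSq ω s p
      nlinarith
    rw [← Complex.sq_norm, ← Complex.sq_norm] at h2
    exact lt_of_pow_lt_pow_left₀ 2 (norm_nonneg _) h2


lemma conj_mul_self (z : ℂ) : conj z * z = ((‖z‖ ^ 2 : ℝ) : ℂ) := by
  rw [mul_comm, Complex.mul_conj, Complex.sq_norm]

lemma factor_u (z₁ z₂ : ℂ) :
    (z₁ + z₂) - conj (z₁ + z₂) * (z₁ * z₂)
      = z₁ * (1 - conj z₂ * z₂) + z₂ * (1 - conj z₁ * z₁) := by
  simp only [map_add]; ring

lemma roots_small_aux (z₁ z₂ : ℂ)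
    (h : ‖z₁ * (1 - conj z₂ * z₂) + z₂ * (1 - conj z₁ * z₁)‖
        < 1 - Complex.normSq (z₁ * z₂)) :
    ‖z₁‖ < 1 := by
  set a := ‖z₁‖ with ha
  set b := ‖z₂‖ with hb
  have ha0 : 0 ≤ a := norm_nonneg _
  have hb0 : 0 ≤ b := norm_nonneg _
  have hnsq : Complex.normSq (z₁ * z₂) = (a * b) ^ 2 := by
    rw [← Complex.sq_norm, norm_mul]
  rw [hnsq] at h
  have habs0 : 0 ≤ ‖z₁ * (1 - conj z₂ * z₂) + z₂ * (1 - conj z₁ * z₁)‖ :=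
    norm_nonneg _
  have hab : a * b < 1 := by nlinarith [mul_nonneg ha0 hb0]
  by_contra hc
  push_neg at hc
  have hb1 : b < 1 := by nlinarith
  have f1 : (1 : ℂ) - conj z₂ * z₂ = (((1 - b ^ 2 : ℝ)) : ℂ) := by
    rw [conj_mul_self]; push_cast; ring
  have f2 : (1 : ℂ) - conj z₁ * z₁ = (((1 - a ^ 2 : ℝ)) : ℂ) := by
    rw [conj_mul_self]; push_cast; ring
  have e1 : ‖z₁ * (1 - conj z₂ * z₂)‖ = a * (1 - b ^ 2) := by
    rw [norm_mul, f1, Complex.norm_real, Real.norm_eq_abs, _root_.abs_of_nonneg (by nlinarith : (0:ℝ) ≤ 1 - b ^ 2)]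
  have e2 : ‖z₂ * (1 - conj z₁ * z₁)‖ = b * (a ^ 2 - 1) := by
    rw [norm_mul, f2, Complex.norm_real, Real.norm_eq_abs, _root_.abs_of_nonpos (by nlinarith : (1 - a ^ 2 : ℝ) ≤ 0)]
    ring
  have tri : a * (1 - b ^ 2) ≤
      ‖z₁ * (1 - conj z₂ * z₂) + z₂ * (1 - conj z₁ * z₁)‖ + b * (a ^ 2 - 1) := by
    calc a * (1 - b ^ 2) = ‖z₁ * (1 - conj z₂ * z₂)‖ := e1.symm
      _ = ‖(z₁ * (1 - conj z₂ * z₂) + z₂ * (1 - conj z₁ * z₁))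
            - z₂ * (1 - conj z₁ * z₁)‖ := by ring_nf
      _ ≤ _ := by
          rw [← e2]
          exact (norm_sub_le _ _)
  nlinarith [mul_nonneg (mul_nonneg (by linarith : (0:ℝ) ≤ a - 1) (by linarith : (0:ℝ) ≤ 1 - b)) (by linarith : (0:ℝ) ≤ 1 - a * b)]

theorem stmt_2 (s p : ℂ) :
    (s, p) ∈ G2 ↔
      ‖s‖ < 2 ∧
        ∀ ω : ℂ, ‖ω‖ = 1 →
          ‖(2 * p - ω * s) / (2 - conj ω * s)‖ < 1 := by
  constructor
  · rintro ⟨z₁, z₂, h₁, h₂, heq⟩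
    obtain ⟨hs, hp⟩ : s = z₁ + z₂ ∧ p = z₁ * z₂ := by
      simpa [Prod.ext_iff] using heq
    subst hs; subst hp
    have ha0 : 0 ≤ ‖z₁‖ := norm_nonneg _
    have hb0 : 0 ≤ ‖z₂‖ := norm_nonneg _
    have hs2 : ‖z₁ + z₂‖ < 2 := by
      have := norm_add_le z₁ z₂; linarith
    refine ⟨hs2, fun ω hω => ?_⟩
    rw [abs_cond_iff _ _ _ hs2 hω]
    set a := ‖z₁‖
    set b := ‖z₂‖
    have hre : (conj ω * ((z₁ + z₂) - conj (z₁ + z₂) * (z₁ * z₂))).re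
        ≤ a * (1 - b ^ 2) + b * (1 - a ^ 2) := by
      refine le_trans (Complex.re_le_norm _) ?_
      rw [norm_mul, Complex.norm_conj, hω, one_mul, factor_u]
      refine le_trans (norm_add_le _ _) ?_
      have f1 : (1 : ℂ) - conj z₂ * z₂ = (((1 - b ^ 2 : ℝ)) : ℂ) := by
        rw [conj_mul_self]; push_cast; ring
      have f2 : (1 : ℂ) - conj z₁ * z₁ = (((1 - a ^ 2 : ℝ)) : ℂ) := by
        rw [conj_mul_self]; push_cast; ring
      rw [norm_mul, norm_mul, f1, f2, Complex.norm_real, Real.norm_eq_abs, Complex.norm_real, Real.norm_eq_abs,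
        _root_.abs_of_nonneg (by nlinarith : (0:ℝ) ≤ 1 - b ^ 2),
        _root_.abs_of_nonneg (by nlinarith : (0:ℝ) ≤ 1 - a ^ 2)]
    have hnsq : Complex.normSq (z₁ * z₂) = (a * b) ^ 2 := by
      rw [← Complex.sq_norm, norm_mul]
    rw [hnsq]
    nlinarith [mul_pos (mul_pos (by linarith : (0:ℝ) < 1 - a) (by linarith : (0:ℝ) < 1 - b))
      (by nlinarith : (0:ℝ) < 1 - a * b)]
  · rintro ⟨hs, hcond⟩
    have hu : ‖s - conj s * p‖ < 1 - Complex.normSq p := by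
      rcases eq_or_ne (s - conj s * p) 0 with h0 | h0
      · have h1 := (abs_cond_iff s p 1 hs (by simp)).mp (hcond 1 (by simp))
        rw [h0] at h1
        simpa [h0] using h1
      · set u := s - conj s * p with hu_def
        have hau : (0:ℝ) < ‖u‖ := norm_pos_iff.mpr h0
        have hωu : ‖u / (‖u‖ : ℂ)‖ = 1 := by
          rw [norm_div, Complex.norm_real, Real.norm_eq_abs, _root_.abs_of_nonneg hau.le, div_self hau.ne']
        have h1 := (abs_cond_iff s p _ hs hωu).mp (hcond _ hωu)
        have h2 : conj (u / (‖u‖ : ℂ)) * u = ((‖u‖ : ℝ) : ℂ) := by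
          rw [map_div₀, Complex.conj_ofReal, div_mul_eq_mul_div, conj_mul_self]
          rw [div_eq_iff (by exact_mod_cast hau.ne' : ((‖u‖ : ℝ) : ℂ) ≠ 0)]
          push_cast; ring
        rw [h2] at h1
        simpa using h1
    obtain ⟨c, hc⟩ := IsAlgClosed.exists_pow_nat_eq (k := ℂ) (s ^ 2 - 4 * p) (n := 2) (by norm_num)
    have hsum : (s + c) / 2 + (s - c) / 2 = s := by ring
    have hprod : (s + c) / 2 * ((s - c) / 2) = p := by linear_combination (-(1:ℂ)/4) * hc
    have hu' : ‖(s + c) / 2 * (1 - conj ((s - c) / 2) * ((s - c) / 2))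
          + (s - c) / 2 * (1 - conj ((s + c) / 2) * ((s + c) / 2))‖
        < 1 - Complex.normSq ((s + c) / 2 * ((s - c) / 2)) := by
      rw [← factor_u, hsum, hprod]
      exact hu
    have hu'' : ‖(s - c) / 2 * (1 - conj ((s + c) / 2) * ((s + c) / 2))
          + (s + c) / 2 * (1 - conj ((s - c) / 2) * ((s - c) / 2))‖
        < 1 - Complex.normSq ((s - c) / 2 * ((s + c) / 2)) := by
      rw [← factor_u, (by ring : (s - c) / 2 + (s + c) / 2 = s),
        (by linear_combination (-(1:ℂ)/4) * hc : (s - c) / 2 * ((s + c) / 2) = p)]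
      exact hu
    exact ⟨(s + c) / 2, (s - c) / 2, roots_small_aux _ _ hu', roots_small_aux _ _ hu'',
      by rw [Prod.ext_iff]; exact ⟨hsum.symm, hprod.symm⟩⟩
end

section
/- For complex numbers s, p, the pair (s,p) lies in the symmetrized bidisc G₂ if and only if |p| < 1 and there exists β ∈ ℂ with |β| < 1 such that s = β p + β̄. -/
open Complex ComplexConjugate

lemma one_sub_mul_conj (z : ℂ) : 1 - z * conj z = ((1 - ‖z‖ ^ 2 : ℝ) : ℂ) := by
  rw [Complex.mul_conj, ← Complex.sq_norm]
  push_cast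
  ring

lemma key_id (z₁ z₂ : ℂ) :
    conj (z₁ + z₂) - (z₁ + z₂) * conj (z₁ * z₂) =
      conj z₁ * (1 - z₂ * conj z₂) + conj z₂ * (1 - z₁ * conj z₁) := by
  simp only [map_add, map_mul]
  ring

lemma aux_real (a b : ℝ) (ha : 0 ≤ a) (hb : 0 ≤ b) (ha1 : a < 1) (hb1 : b < 1) :
    a * (1 - b ^ 2) + b * (1 - a ^ 2) < 1 - a ^ 2 * b ^ 2 := by
  nlinarith [mul_pos (mul_pos (sub_pos.2 ha1) (sub_pos.2 hb1))
    (sub_pos.2 (show a * b < 1 by nlinarith))]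

lemma aux_real2 (a b : ℝ) (hb : 0 ≤ b) (ha1 : 1 ≤ a) (hb1 : b < 1) (hab : a * b < 1) :
    1 - a ^ 2 * b ^ 2 ≤ a * (1 - b ^ 2) - b * (a ^ 2 - 1) := by
  nlinarith [mul_nonneg (mul_nonneg (sub_nonneg.2 ha1) (sub_nonneg.2 hb1.le))
    (sub_nonneg.2 hab.le)]

lemma root_lt (z₁ z₂ : ℂ) (hp : ‖z₁ * z₂‖ < 1)
    (hA : ‖conj (z₁ + z₂) - (z₁ + z₂) * conj (z₁ * z₂)‖ <
      1 - ‖z₁ * z₂‖ ^ 2) :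
    ‖z₁‖ < 1 := by
  by_contra h
  push_neg at h
  have hab : ‖z₁‖ * ‖z₂‖ < 1 := by rwa [norm_mul] at hp
  have hb0 : 0 ≤ ‖z₂‖ := norm_nonneg _
  have hb1 : ‖z₂‖ < 1 := by
    have := le_mul_of_one_le_left hb0 h
    linarith
  rw [key_id, one_sub_mul_conj, one_sub_mul_conj, norm_mul] at hA
  have hX : ‖conj z₁ * ((1 - ‖z₂‖ ^ 2 : ℝ) : ℂ)‖ =
      ‖z₁‖ * (1 - ‖z₂‖ ^ 2) := by
    rw [norm_mul, Complex.norm_conj, Complex.norm_real, Real.norm_eq_abs,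
      _root_.abs_of_nonneg (by nlinarith)]
  have hY : ‖conj z₂ * ((1 - ‖z₁‖ ^ 2 : ℝ) : ℂ)‖ =
      ‖z₂‖ * (‖z₁‖ ^ 2 - 1) := by
    rw [norm_mul, Complex.norm_conj, Complex.norm_real, Real.norm_eq_abs,
      _root_.abs_of_nonpos (by nlinarith)]
    ring
  have htri := norm_sub_le_norm_add (conj z₁ * ((1 - ‖z₂‖ ^ 2 : ℝ) : ℂ))
    (conj z₂ * ((1 - ‖z₁‖ ^ 2 : ℝ) : ℂ))
  rw [hX, hY] at htri
  have hlow := aux_real2 (‖z₁‖) (‖z₂‖) hb0 h hb1 hab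
  nlinarith [htri, hA, hlow]

theorem stmt_3 (s p : ℂ) :
    (s, p) ∈ G2 ↔
      ‖p‖ < 1 ∧ ∃ β : ℂ, ‖β‖ < 1 ∧ s = β * p + conj β := by
  constructor
  · rintro ⟨z₁, z₂, h1, h2, heq⟩
    obtain ⟨hs, hp⟩ : s = z₁ + z₂ ∧ p = z₁ * z₂ := by
      simpa [Prod.ext_iff] using heq
    subst hs hp
    have hp1 : ‖z₁ * z₂‖ < 1 := by
      rw [norm_mul]
      exact mul_lt_one_of_nonneg_of_lt_one_left (norm_nonneg _) h1 h2.le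
    refine ⟨hp1, ?_⟩
    set s := z₁ + z₂ with hsdef
    set p := z₁ * z₂ with hpdef
    set D : ℝ := 1 - ‖p‖ ^ 2 with hD
    have hD0 : 0 < D := by nlinarith [norm_nonneg p]
    have hDc : ((D : ℝ) : ℂ) = 1 - p * conj p := (one_sub_mul_conj p).symm
    set A : ℂ := conj s - s * conj p with hA
    have habsA : ‖A‖ < D := by
      rw [hA, hsdef, hpdef, key_id, one_sub_mul_conj, one_sub_mul_conj]
      have h1' := norm_add_le (conj z₁ * ((1 - ‖z₂‖ ^ 2 : ℝ) : ℂ))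
        (conj z₂ * ((1 - ‖z₁‖ ^ 2 : ℝ) : ℂ))
      have hX : ‖conj z₁ * ((1 - ‖z₂‖ ^ 2 : ℝ) : ℂ)‖ =
          ‖z₁‖ * (1 - ‖z₂‖ ^ 2) := by
        rw [norm_mul, Complex.norm_conj, Complex.norm_real, Real.norm_eq_abs,
          _root_.abs_of_nonneg (by nlinarith [norm_nonneg z₂])]
      have hY : ‖conj z₂ * ((1 - ‖z₁‖ ^ 2 : ℝ) : ℂ)‖ =
          ‖z₂‖ * (1 - ‖z₁‖ ^ 2) := by
        rw [norm_mul, Complex.norm_conj, Complex.norm_real, Real.norm_eq_abs,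
          _root_.abs_of_nonneg (by nlinarith [norm_nonneg z₁])]
      have hkey := aux_real (‖z₁‖) (‖z₂‖)
        (norm_nonneg _) (norm_nonneg _) h1 h2
      have hDval : D = 1 - ‖z₁‖ ^ 2 * ‖z₂‖ ^ 2 := by
        rw [hD, hpdef, norm_mul]; ring
      rw [hX, hY] at h1'
      rw [hDval]
      linarith
    have hDne : ((D : ℝ) : ℂ) ≠ 0 := by
      simp only [ne_eq, Complex.ofReal_eq_zero]
      exact hD0.ne'
    refine ⟨A / ((D : ℝ) : ℂ), ?_, ?_⟩
    · rw [norm_div, Complex.norm_real, Real.norm_eq_abs, _root_.abs_of_pos hD0]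
      exact (div_lt_one hD0).2 habsA
    · have hconjA : conj A = s - conj s * p := by
        rw [hA, map_sub, map_mul, Complex.conj_conj, Complex.conj_conj]
      rw [map_div₀, hconjA, Complex.conj_ofReal]
      rw [div_mul_eq_mul_div, ← add_div, eq_div_iff hDne, hDc, hA]
      ring
  · rintro ⟨hp, β, hβ, hs⟩
    obtain ⟨d, hd⟩ := Complex.isAlgClosed.exists_pow_nat_eq (s ^ 2 - 4 * p) two_pos
    set z₁ : ℂ := (s + d) / 2 with hz1
    set z₂ : ℂ := (s - d) / 2 with hz2
    have hsum : z₁ + z₂ = s := by rw [hz1, hz2]; ring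
    have hprod : z₁ * z₂ = p := by
      rw [hz1, hz2]
      field_simp
      linear_combination -hd
    have hp' : ‖z₁ * z₂‖ < 1 := by rw [hprod]; exact hp
    have hp0 : 0 < 1 - ‖p‖ ^ 2 := by nlinarith [norm_nonneg p]
    have hAeq : conj s - s * conj p = β * (1 - p * conj p) := by
      rw [hs]
      simp only [map_add, map_mul, Complex.conj_conj]
      ring
    have habs : ‖conj s - s * conj p‖ < 1 - ‖p‖ ^ 2 := by
      rw [hAeq, norm_mul]
      have habs1 : ‖1 - p * conj p‖ = 1 - ‖p‖ ^ 2 := by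
        rw [one_sub_mul_conj, Complex.norm_real, Real.norm_eq_abs, _root_.abs_of_pos hp0]
      rw [habs1]
      nlinarith [norm_nonneg β]
    have hA1 : ‖conj (z₁ + z₂) - (z₁ + z₂) * conj (z₁ * z₂)‖ <
        1 - ‖z₁ * z₂‖ ^ 2 := by
      rw [hsum, hprod]; exact habs
    have hA2 : ‖conj (z₂ + z₁) - (z₂ + z₁) * conj (z₂ * z₁)‖ <
        1 - ‖z₂ * z₁‖ ^ 2 := by
      rw [add_comm z₂ z₁, mul_comm z₂ z₁]; exact hA1
    exact ⟨z₁, z₂, root_lt z₁ z₂ hp' hA1,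
      root_lt z₂ z₁ (by rw [mul_comm z₂ z₁]; exact hp') hA2,
      by rw [Prod.mk.injEq]; exact ⟨hsum.symm, hprod.symm⟩⟩
end

section
/- If h ∈ Aut(D) is a Möbius automorphism of the unit disc, then the map H_h defined by H_h(λ₁+λ₂, λ₁λ₂) = (h(λ₁)+h(λ₂), h(λ₁)h(λ₂)) is a well-defined biholomorphic self-map of the symmetrized bidisc G₂. -/
section Helpers

open Complex ComplexConjugate Metric Set

lemma den_ne {a z : ℂ} (ha : ‖a‖ < 1) (hz : ‖z‖ < 1) :
    (1 : ℂ) - conj a * z ≠ 0 := by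
  intro h
  have h1 : conj a * z = 1 := by linear_combination -h
  have h2 : ‖conj a * z‖ = 1 := by rw [h1]; simp
  rw [norm_mul, Complex.norm_conj] at h2
  nlinarith [norm_nonneg a, norm_nonneg z]

lemma mobius_lt {a z : ℂ} (ha : ‖a‖ < 1) (hz : ‖z‖ < 1) :
    ‖(z - a) / (1 - conj a * z)‖ < 1 := by
  rw [norm_div, div_lt_one (norm_pos_iff.mpr (den_ne ha hz))]
  have key : Complex.normSq (1 - conj a * z) - Complex.normSq (z - a)
      = (1 - Complex.normSq a) * (1 - Complex.normSq z) := by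
    simp [Complex.normSq_apply, Complex.mul_re, Complex.mul_im]
    ring
  have h1 := Complex.sq_norm (1 - conj a * z)
  have h2 := Complex.sq_norm (z - a)
  have h3 := Complex.sq_norm a
  have h4 := Complex.sq_norm z
  by_contra hcon
  push_neg at hcon
  have hsq := mul_self_le_mul_self (norm_nonneg _) hcon
  nlinarith [mul_self_lt_mul_self (norm_nonneg a) ha,
    mul_self_lt_mul_self (norm_nonneg z) hz]

lemma mobius_of_aut (h g : ℂ → ℂ)
    (hd : DifferentiableOn ℂ h (Metric.ball (0 : ℂ) 1))
    (hgd : DifferentiableOn ℂ g (Metric.ball (0 : ℂ) 1))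
    (hmaps : Set.MapsTo h (Metric.ball (0 : ℂ) 1) (Metric.ball (0 : ℂ) 1))
    (hgmaps : Set.MapsTo g (Metric.ball (0 : ℂ) 1) (Metric.ball (0 : ℂ) 1))
    (hgh : ∀ z ∈ Metric.ball (0 : ℂ) 1, g (h z) = z)
    (hhg : ∀ z ∈ Metric.ball (0 : ℂ) 1, h (g z) = z) :
    ∃ ω a : ℂ, ‖ω‖ = 1 ∧ ‖a‖ < 1 ∧
      ∀ z, ‖z‖ < 1 → h z = ω * ((z - a) / (1 - conj a * z)) := by
  set a : ℂ := g 0 with ha_def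
  have ha : ‖a‖ < 1 := by
    simpa using mem_ball_zero_iff.1 (hgmaps (mem_ball_self one_pos))
  set ψ : ℂ → ℂ := fun w => (w + a) / (1 + conj a * w) with hψ_def
  set φ : ℂ → ℂ := fun z => (z - a) / (1 - conj a * z) with hφ_def
  have hψden : ∀ w : ℂ, ‖w‖ < 1 → (1 : ℂ) + conj a * w ≠ 0 := by
    intro w hw
    have := den_ne (a := -a) (by simpa using ha) hw
    simpa [sub_eq_add_neg] using this
  have hψmem : ∀ w : ℂ, ‖w‖ < 1 → ‖ψ w‖ < 1 := by
    intro w hw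
    have := mobius_lt (a := -a) (by simpa using ha) hw
    simpa [hψ_def, sub_eq_add_neg] using this
  have hφmem : ∀ z : ℂ, ‖z‖ < 1 → ‖φ z‖ < 1 := fun z hz =>
    mobius_lt ha hz
  have hψφ : ∀ z : ℂ, ‖z‖ < 1 → ψ (φ z) = z := by
    intro z hz
    have h1 : (1 : ℂ) - conj a * z ≠ 0 := den_ne ha hz
    have h2 : (1 : ℂ) + conj a * φ z ≠ 0 := hψden _ (hφmem z hz)
    simp only [hψ_def, hφ_def] at h2 ⊢
    field_simp at h2 ⊢
    ring_nf
    ring_nf at h2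
    have h3 : (1 : ℂ) - a * conj a ≠ 0 := by
      intro he; exact h2 (by linear_combination (1 - conj a * z)⁻¹ * he)
    field_simp [h3]
    ring
  have hφψ : ∀ w : ℂ, ‖w‖ < 1 → φ (ψ w) = w := by
    intro w hw
    have h1 : (1 : ℂ) + conj a * w ≠ 0 := hψden w hw
    have h2 : (1 : ℂ) - conj a * ψ w ≠ 0 := den_ne ha (hψmem w hw)
    simp only [hψ_def, hφ_def] at h2 ⊢
    field_simp at h2 ⊢
    ring_nf
    ring_nf at h2
    have h3 : (1 : ℂ) - a * conj a ≠ 0 := by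
      intro he; exact h2 (by linear_combination (1 + conj a * w)⁻¹ * he)
    field_simp [h3]
    ring
  -- F = h ∘ ψ is an automorphism of the disc fixing 0
  set F : ℂ → ℂ := fun z => h (ψ z) with hF_def
  have hψd : DifferentiableOn ℂ ψ (Metric.ball (0 : ℂ) 1) := by
    intro w hw
    refine DifferentiableAt.differentiableWithinAt ?_
    exact ((differentiableAt_id.add_const a).div
      ((differentiableAt_const _).add ((differentiableAt_const _).mul differentiableAt_id))
      (hψden w (mem_ball_zero_iff.1 hw)))
  have hψmaps : Set.MapsTo ψ (Metric.ball (0 : ℂ) 1) (Metric.ball (0 : ℂ) 1) := by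
    intro w hw; exact mem_ball_zero_iff.2 (hψmem w (mem_ball_zero_iff.1 hw))
  have hFd : DifferentiableOn ℂ F (Metric.ball (0 : ℂ) 1) := hd.comp hψd hψmaps
  have hFmaps : Set.MapsTo F (Metric.ball (0 : ℂ) 1) (Metric.ball (0 : ℂ) 1) :=
    hmaps.comp hψmaps
  have hψ0 : ψ 0 = a := by simp [hψ_def]
  have hF0 : F 0 = 0 := by
    rw [hF_def]; simp only; rw [hψ0, ha_def]
    exact hhg 0 (mem_ball_self one_pos)
  -- the inverse Finv = φ ∘ g
  set Finv : ℂ → ℂ := fun w => φ (g w) with hFinv_def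
  have hφd : DifferentiableOn ℂ φ (Metric.ball (0 : ℂ) 1) := by
    intro z hz
    refine DifferentiableAt.differentiableWithinAt ?_
    exact ((differentiableAt_id.sub_const a).div
      ((differentiableAt_const _).sub ((differentiableAt_const _).mul differentiableAt_id))
      (den_ne ha (mem_ball_zero_iff.1 hz)))
  have hφmaps : Set.MapsTo φ (Metric.ball (0 : ℂ) 1) (Metric.ball (0 : ℂ) 1) := by
    intro z hz; exact mem_ball_zero_iff.2 (hφmem z (mem_ball_zero_iff.1 hz))
  have hFinvd : DifferentiableOn ℂ Finv (Metric.ball (0 : ℂ) 1) := hφd.comp hgd hgmaps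
  have hFinvmaps : Set.MapsTo Finv (Metric.ball (0 : ℂ) 1) (Metric.ball (0 : ℂ) 1) :=
    hφmaps.comp hgmaps
  have hFinv0 : Finv 0 = 0 := by
    rw [hFinv_def]; simp only [← ha_def, hφ_def]; simp
  have hFinvF : ∀ z, ‖z‖ < 1 → Finv (F z) = z := by
    intro z hz
    have h1 : ‖ψ z‖ < 1 := hψmem z hz
    rw [hFinv_def, hF_def]; simp only
    rw [hgh (ψ z) (mem_ball_zero_iff.2 h1)]
    exact hφψ z hz
  -- |F z| = |z| on the disc
  have habs : ∀ z, ‖z‖ < 1 → ‖F z‖ = ‖z‖ := by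
    intro z hz
    have hle : ‖F z‖ ≤ ‖z‖ :=
      Complex.norm_le_norm_of_mapsTo_ball hFd (hFmaps.mono_right ball_subset_closedBall) hF0 hz
    have hFz : ‖F z‖ < 1 := mem_ball_zero_iff.1 (hFmaps (mem_ball_zero_iff.2 hz))
    have hge : ‖z‖ ≤ ‖F z‖ := by
      have := Complex.norm_le_norm_of_mapsTo_ball hFinvd (hFinvmaps.mono_right ball_subset_closedBall) hFinv0 hFz
      rwa [hFinvF z hz] at this
    exact le_antisymm hle hge
  -- Schwarz equality case
  set z₀ : ℂ := (1/2 : ℂ) with hz₀_def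
  have hz₀ : z₀ ∈ Metric.ball (0 : ℂ) 1 := by
    rw [mem_ball_zero_iff]; simp [hz₀_def]; norm_num
  have hz₀ne : z₀ ≠ 0 := by simp [hz₀_def]
  have hFmaps' : Set.MapsTo F (Metric.ball (0 : ℂ) 1) (Metric.ball (F 0) 1) := by
    rwa [hF0]
  have hds : dslope F 0 z₀ = F z₀ / z₀ := by
    rw [dslope_of_ne F hz₀ne, slope_def_field, hF0, sub_zero, sub_zero]
  have heq : ‖dslope F 0 z₀‖ = 1 / 1 := by
    rw [hds]
    rw [norm_div, habs z₀ (mem_ball_zero_iff.1 hz₀)]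
    rw [div_self (norm_ne_zero_iff.mpr hz₀ne)]
    norm_num
  have haff := Complex.affine_of_mapsTo_ball_of_exists_norm_dslope_eq_div
    (R₁ := 1) (R₂ := 1) hFd (hFmaps'.mono_right ball_subset_closedBall) hz₀ heq
  set ω : ℂ := dslope F 0 z₀ with hω_def
  have hωabs : ‖ω‖ = 1 := by
    have := heq; simpa using this
  have hFω : ∀ z, ‖z‖ < 1 → F z = ω * z := by
    intro z hz
    have := haff (mem_ball_zero_iff.2 hz)
    simp only [hF0, sub_zero, zero_add, smul_eq_mul] at this
    rw [this]; ring
  refine ⟨ω, a, hωabs, ha, fun z hz => ?_⟩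
  have h1 : ‖φ z‖ < 1 := hφmem z hz
  have h2 : h z = F (φ z) := by rw [hF_def]; simp only; rw [hψφ z hz]
  rw [h2, hFω _ h1, hφ_def]

end Helpers


open Complex ComplexConjugate

section Helpers2
open Complex ComplexConjugate Metric Set

lemma half (h g : ℂ → ℂ)
    (hd : DifferentiableOn ℂ h (Metric.ball (0 : ℂ) 1))
    (hgd : DifferentiableOn ℂ g (Metric.ball (0 : ℂ) 1))
    (hmaps : Set.MapsTo h (Metric.ball (0 : ℂ) 1) (Metric.ball (0 : ℂ) 1))
    (hgmaps : Set.MapsTo g (Metric.ball (0 : ℂ) 1) (Metric.ball (0 : ℂ) 1))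
    (hgh : ∀ z ∈ Metric.ball (0 : ℂ) 1, g (h z) = z)
    (hhg : ∀ z ∈ Metric.ball (0 : ℂ) 1, h (g z) = z) :
    ∃ H : ℂ × ℂ → ℂ × ℂ,
      (∀ z₁ z₂ : ℂ, ‖z₁‖ < 1 → ‖z₂‖ < 1 →
          H (z₁ + z₂, z₁ * z₂) = (h z₁ + h z₂, h z₁ * h z₂)) ∧
      DifferentiableOn ℂ H G2 ∧ Set.MapsTo H G2 G2 := by
  obtain ⟨ω, a, hω, ha, hrep⟩ := mobius_of_aut h g hd hgd hmaps hgmaps hgh hhg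
  set d : ℂ × ℂ → ℂ := fun w => 1 - conj a * w.1 + conj a ^ 2 * w.2 with hd_def
  set H : ℂ × ℂ → ℂ × ℂ := fun w =>
    (ω * (((1 + a * conj a) * w.1 - 2 * a - 2 * conj a * w.2) / d w),
     ω ^ 2 * ((w.2 - a * w.1 + a ^ 2) / d w)) with hH_def
  have hdfac : ∀ z₁ z₂ : ℂ, d (z₁ + z₂, z₁ * z₂)
      = (1 - conj a * z₁) * (1 - conj a * z₂) := by
    intro z₁ z₂; simp only [hd_def]; ring
  have hform : ∀ z₁ z₂ : ℂ, ‖z₁‖ < 1 → ‖z₂‖ < 1 →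
      H (z₁ + z₂, z₁ * z₂) = (h z₁ + h z₂, h z₁ * h z₂) := by
    intro z₁ z₂ h1 h2
    have e1 : (1 : ℂ) - conj a * z₁ ≠ 0 := den_ne ha h1
    have e2 : (1 : ℂ) - conj a * z₂ ≠ 0 := den_ne ha h2
    rw [hrep z₁ h1, hrep z₂ h2, hH_def]
    simp only [hdfac]
    refine Prod.ext ?_ ?_ <;> simp only <;> field_simp <;> ring
  have hdne : ∀ w ∈ G2, d w ≠ 0 := by
    rintro w ⟨z₁, z₂, h1, h2, rfl⟩
    rw [hdfac]
    exact mul_ne_zero (den_ne ha h1) (den_ne ha h2)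
  have hdiff : DifferentiableOn ℂ H G2 := by
    intro w hw
    refine DifferentiableAt.differentiableWithinAt ?_
    have hden : d w ≠ 0 := hdne w hw
    have hdd : DifferentiableAt ℂ d w := by
      simp only [hd_def]
      fun_prop
    have hn1 : DifferentiableAt ℂ (fun w : ℂ × ℂ =>
        (1 + a * conj a) * w.1 - 2 * a - 2 * conj a * w.2) w := by fun_prop
    have hn2 : DifferentiableAt ℂ (fun w : ℂ × ℂ => w.2 - a * w.1 + a ^ 2) w := by fun_prop
    have hinv : DifferentiableAt ℂ (fun w : ℂ × ℂ => (d w)⁻¹) w := hdd.inv hden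
    simp only [hH_def, div_eq_mul_inv]
    exact DifferentiableAt.prodMk ((hn1.mul hinv).const_mul ω)
      ((hn2.mul hinv).const_mul (ω ^ 2))
  refine ⟨H, hform, hdiff, ?_⟩
  rintro w ⟨z₁, z₂, h1, h2, rfl⟩
  rw [hform z₁ z₂ h1 h2]
  exact ⟨h z₁, h z₂, mem_ball_zero_iff.1 (hmaps (mem_ball_zero_iff.2 h1)),
    mem_ball_zero_iff.1 (hmaps (mem_ball_zero_iff.2 h2)), rfl⟩


end Helpers2

/-- If `h` is an automorphism of the unit disc (with holomorphic inverse `g`), then the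
symmetrization `H_h` is a well-defined biholomorphic self-map of the symmetrized bidisc. -/
theorem stmt_5 (h g : ℂ → ℂ)
    (hd : DifferentiableOn ℂ h (Metric.ball (0 : ℂ) 1))
    (hgd : DifferentiableOn ℂ g (Metric.ball (0 : ℂ) 1))
    (hmaps : Set.MapsTo h (Metric.ball (0 : ℂ) 1) (Metric.ball (0 : ℂ) 1))
    (hgmaps : Set.MapsTo g (Metric.ball (0 : ℂ) 1) (Metric.ball (0 : ℂ) 1))
    (hgh : ∀ z ∈ Metric.ball (0 : ℂ) 1, g (h z) = z)
    (hhg : ∀ z ∈ Metric.ball (0 : ℂ) 1, h (g z) = z) :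
    ∃ H : ℂ × ℂ → ℂ × ℂ,
      (∀ z₁ z₂ : ℂ, ‖z₁‖ < 1 → ‖z₂‖ < 1 →
          H (z₁ + z₂, z₁ * z₂) = (h z₁ + h z₂, h z₁ * h z₂)) ∧
      DifferentiableOn ℂ H G2 ∧ Set.BijOn H G2 G2 ∧
      ∃ K : ℂ × ℂ → ℂ × ℂ, DifferentiableOn ℂ K G2 ∧
        (∀ w ∈ G2, K (H w) = w) ∧ (∀ w ∈ G2, H (K w) = w) := by
  obtain ⟨H, hHf, hHd, hHm⟩ := half h g hd hgd hmaps hgmaps hgh hhg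
  obtain ⟨K, hKf, hKd, hKm⟩ := half g h hgd hd hgmaps hmaps hhg hgh
  have hKH : ∀ w ∈ G2, K (H w) = w := by
    rintro w ⟨z₁, z₂, h1, h2, rfl⟩
    rw [hHf z₁ z₂ h1 h2]
    have b1 : ‖h z₁‖ < 1 := mem_ball_zero_iff.1 (hmaps (mem_ball_zero_iff.2 h1))
    have b2 : ‖h z₂‖ < 1 := mem_ball_zero_iff.1 (hmaps (mem_ball_zero_iff.2 h2))
    rw [hKf (h z₁) (h z₂) b1 b2, hgh z₁ (mem_ball_zero_iff.2 h1),
      hgh z₂ (mem_ball_zero_iff.2 h2)]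
  have hHK : ∀ w ∈ G2, H (K w) = w := by
    rintro w ⟨z₁, z₂, h1, h2, rfl⟩
    rw [hKf z₁ z₂ h1 h2]
    have b1 : ‖g z₁‖ < 1 := mem_ball_zero_iff.1 (hgmaps (mem_ball_zero_iff.2 h1))
    have b2 : ‖g z₂‖ < 1 := mem_ball_zero_iff.1 (hgmaps (mem_ball_zero_iff.2 h2))
    rw [hHf (g z₁) (g z₂) b1 b2, hhg z₁ (mem_ball_zero_iff.2 h1),
      hhg z₂ (mem_ball_zero_iff.2 h2)]
  exact ⟨H, hHf, hHd, Set.InvOn.bijOn ⟨hKH, hHK⟩ hHm hKm, K, hKd, hKH, hHK⟩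
end

section
/- Let α ∈ ℂ with |α| < 1 and let H(s,p) = (((1+|α|²)s - 2ᾱp - 2α)/(1 - ᾱs + ᾱ²p), (p - αs + α²)/(1 - ᾱs + ᾱ²p)). Then the complex Jacobian matrix of H at the point (2α, α²) equals (1-|α|²)⁻² times the matrix with rows (1+|α|², -2ᾱ) and (-α, 1). -/
open Complex ComplexConjugate ContinuousLinearMap

theorem stmt_7 (α : ℂ) (hα : ‖α‖ < 1) :
    (fderiv ℂ (fun w : ℂ × ℂ =>
        ((((1 + (‖α‖ : ℂ) ^ 2) * w.1 - 2 * conj α * w.2 - 2 * α) /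
            (1 - conj α * w.1 + (conj α) ^ 2 * w.2),
          (w.2 - α * w.1 + α ^ 2) / (1 - conj α * w.1 + (conj α) ^ 2 * w.2)) : ℂ × ℂ))
        (2 * α, α ^ 2)) (1, 0) =
      ((1 - (‖α‖ : ℂ) ^ 2) ^ 2)⁻¹ • ((1 + (‖α‖ : ℂ) ^ 2, -α) : ℂ × ℂ) ∧
    (fderiv ℂ (fun w : ℂ × ℂ =>
        ((((1 + (‖α‖ : ℂ) ^ 2) * w.1 - 2 * conj α * w.2 - 2 * α) /
            (1 - conj α * w.1 + (conj α) ^ 2 * w.2),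
          (w.2 - α * w.1 + α ^ 2) / (1 - conj α * w.1 + (conj α) ^ 2 * w.2)) : ℂ × ℂ))
        (2 * α, α ^ 2)) (0, 1) =
      ((1 - (‖α‖ : ℂ) ^ 2) ^ 2)⁻¹ • ((-2 * conj α, 1) : ℂ × ℂ) := by
  have hc : (conj α) * α = ((‖α‖ : ℂ)) ^ 2 := by
    rw [mul_comm, Complex.mul_conj, Complex.normSq_eq_norm_sq]; norm_cast
  have habs : ‖α‖ ^ 2 < 1 := by
    nlinarith [norm_nonneg α]
  have hA : (1 : ℂ) - (‖α‖ : ℂ) ^ 2 ≠ 0 := by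
    have h : ((1 - ‖α‖ ^ 2 : ℝ) : ℂ) ≠ 0 := by
      norm_cast; linarith
    push_cast at h; exact h
  have hcb : (1 : ℂ) - conj α * α ≠ 0 := by rw [hc]; exact hA
  set a : ℂ × ℂ := (2 * α, α ^ 2) with ha
  have hda : (1 : ℂ) - conj α * a.1 + (conj α) ^ 2 * a.2 = (1 - conj α * α) ^ 2 := by
    simp only [ha]; ring
  have hda0 : (1 : ℂ) - conj α * a.1 + (conj α) ^ 2 * a.2 ≠ 0 := by
    rw [hda]; exact pow_ne_zero _ hcb
  have hdf : HasFDerivAt (fun w : ℂ × ℂ => 1 - conj α * w.1 + (conj α) ^ 2 * w.2)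
      (-(conj α • ContinuousLinearMap.fst ℂ ℂ ℂ) + (conj α) ^ 2 • ContinuousLinearMap.snd ℂ ℂ ℂ) a :=
    ((hasFDerivAt_fst.const_mul (conj α)).const_sub 1).add (hasFDerivAt_snd.const_mul ((conj α) ^ 2))
  have hn1 : HasFDerivAt (fun w : ℂ × ℂ => (1 + (‖α‖ : ℂ) ^ 2) * w.1 - 2 * conj α * w.2 - 2 * α)
      ((1 + (‖α‖ : ℂ) ^ 2) • ContinuousLinearMap.fst ℂ ℂ ℂ - (2 * conj α) • ContinuousLinearMap.snd ℂ ℂ ℂ) a :=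
    ((hasFDerivAt_fst.const_mul _).sub (hasFDerivAt_snd.const_mul _)).sub_const _
  have hn2 : HasFDerivAt (fun w : ℂ × ℂ => w.2 - α * w.1 + α ^ 2)
      (ContinuousLinearMap.snd ℂ ℂ ℂ - α • ContinuousLinearMap.fst ℂ ℂ ℂ) a :=
    (hasFDerivAt_snd.sub (hasFDerivAt_fst.const_mul α)).add_const _
  have hinv : HasFDerivAt (fun w : ℂ × ℂ => (1 - conj α * w.1 + (conj α) ^ 2 * w.2)⁻¹)
      ((-mulLeftRight ℂ ℂ (1 - conj α * a.1 + (conj α) ^ 2 * a.2)⁻¹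
        (1 - conj α * a.1 + (conj α) ^ 2 * a.2)⁻¹).comp
        (-(conj α • ContinuousLinearMap.fst ℂ ℂ ℂ) + (conj α) ^ 2 • ContinuousLinearMap.snd ℂ ℂ ℂ)) a :=
    (hasFDerivAt_inv' hda0).comp a hdf
  have hq := HasFDerivAt.fderiv (HasFDerivAt.prodMk (hn1.mul hinv) (hn2.mul hinv))
  simp only [Pi.mul_apply] at hq
  simp only [div_eq_mul_inv]
  rw [ha] at hq
  rw [hq]
  have hda2 : (1 : ℂ) - conj α * (2 * α) + conj α ^ 2 * α ^ 2 = (1 - conj α * α) ^ 2 := by ring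
  constructor <;>
  · simp only [ContinuousLinearMap.prod_apply, ContinuousLinearMap.add_apply,
      ContinuousLinearMap.smul_apply, ContinuousLinearMap.sub_apply,
      ContinuousLinearMap.comp_apply, ContinuousLinearMap.neg_apply,
      ContinuousLinearMap.mulLeftRight_apply,
      ContinuousLinearMap.coe_fst', ContinuousLinearMap.coe_snd', smul_eq_mul, Prod.smul_mk,
      Prod.mk.injEq, ha]
    rw [← hc] at *
    constructor <;> (simp only [hda2]; ring)
end

section
/- For s ∈ ℂ with |s| < 1 and β ∈ ℂ, the supremum over ω on the unit circle of |(s²ω² - 2ωs + 1)·β| / |sω² - 2ω + s̄| equals |β|·(|s|+1)/2. -/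
open Complex ComplexConjugate

theorem stmt_11 (s β : ℂ) (hs : ‖s‖ < 1) :
    sSup ((fun ω : ℂ =>
        ‖(s ^ 2 * ω ^ 2 - 2 * ω * s + 1) * β‖ /
          ‖s * ω ^ 2 - 2 * ω + conj s‖)
      '' {ω : ℂ | ‖ω‖ = 1}) = ‖β‖ * (‖s‖ + 1) / 2 := by
  have key : ∀ ω : ℂ, ‖ω‖ = 1 →
      ‖(s ^ 2 * ω ^ 2 - 2 * ω * s + 1) * β‖ /
        ‖s * ω ^ 2 - 2 * ω + conj s‖
      = ‖β‖ * ((‖s‖) ^ 2 - 2 * (s * ω).re + 1)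
          / (2 * (1 - (s * ω).re)) := by
    intro ω hω
    have hωc : ω * conj ω = 1 := by
      rw [Complex.mul_conj]
      norm_cast
      simp [← Complex.sq_norm, hω]
    have habs : ‖s * ω‖ = ‖s‖ := by
      rw [norm_mul, hω, mul_one]
    have ht1 : (s * ω).re < 1 :=
      lt_of_le_of_lt (Complex.re_le_norm _) (habs ▸ hs)
    have hnum : s ^ 2 * ω ^ 2 - 2 * ω * s + 1 = (s * ω - 1) ^ 2 := by ring
    have hden : s * ω ^ 2 - 2 * ω + conj s = ω * ((s * ω) + conj (s * ω) - 2) := by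
      rw [map_mul]
      linear_combination (-(conj s)) * hωc
    have hsq : (‖s * ω - 1‖) ^ 2
        = (‖s‖) ^ 2 - 2 * (s * ω).re + 1 := by
      have h1 : (‖s‖) ^ 2 = Complex.normSq (s * ω) := by
        rw [← habs, Complex.sq_norm]
      rw [Complex.sq_norm, Complex.normSq_apply, h1, Complex.normSq_apply]
      simp [Complex.sub_re, Complex.sub_im]
      ring
    have hz : (s * ω) + conj (s * ω) - 2 = ((2 * (s * ω).re - 2 : ℝ) : ℂ) := by
      rw [Complex.add_conj]
      push_cast
      ring
    rw [hnum, hden, norm_mul, norm_mul, norm_pow, hω, one_mul, hz, Complex.norm_real, Real.norm_eq_abs,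
      show |2 * (s * ω).re - 2| = 2 * (1 - (s * ω).re) by
        rw [abs_of_nonpos (by linarith)]; ring,
      hsq]
    ring
  apply IsGreatest.csSup_eq
  constructor
  · by_cases h0 : s = 0
    · refine ⟨1, by simp, ?_⟩
      dsimp only
      rw [key 1 (by simp)]
      simp [h0]
    · have hsne : ‖s‖ ≠ 0 := norm_ne_zero_iff.mpr h0
      have hω : ‖-(‖s‖ : ℂ) / s‖ = 1 := by
        rw [norm_div, norm_neg, Complex.norm_real, Real.norm_eq_abs,
          _root_.abs_of_nonneg (norm_nonneg s), div_self hsne]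
      refine ⟨-(‖s‖ : ℂ) / s, hω, ?_⟩
      dsimp only
      rw [key _ hω]
      have hsω : s * (-(‖s‖ : ℂ) / s) = -(‖s‖ : ℂ) := by
        field_simp
      rw [hsω]
      simp only [Complex.neg_re, Complex.ofReal_re]
      have h1 : (1 : ℝ) + ‖s‖ > 0 := by positivity
      field_simp [h1.ne']
      ring
  · rintro x ⟨ω, hω, rfl⟩
    simp only [Set.mem_setOf_eq] at hω
    dsimp only
    rw [key ω hω]
    have habs : ‖s * ω‖ = ‖s‖ := by
      rw [norm_mul, hω, mul_one]
    have hre : |(s * ω).re| ≤ ‖s‖ := habs ▸ Complex.abs_re_le_norm _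
    have ht1 : (s * ω).re ≤ ‖s‖ := (abs_le.mp hre).2
    have ht2 : -(‖s‖) ≤ (s * ω).re := (abs_le.mp hre).1
    have hpos : (0 : ℝ) < 1 - (s * ω).re := by linarith
    have hb : (0 : ℝ) ≤ ‖β‖ := norm_nonneg β
    rw [div_le_div_iff₀ (by positivity) (by norm_num)]
    nlinarith [mul_nonneg hb (mul_nonneg
      (by linarith : (0:ℝ) ≤ 1 - ‖s‖)
      (by linarith : (0:ℝ) ≤ (s * ω).re + ‖s‖))]
end

section
/- Let θ ∈ [0, 2π) and z₀ = (e^{iθ}, 0). The boundary of the symmetrized bidisc G₂, defined by h(s,p) = 2|s - s̄p| + |s² - 4p| + |s|² - 4 = 0, is C¹ near z₀, and the partial derivatives satisfy ∂h/∂s(z₀) = 3e^{-iθ} and ∂h/∂p(z₀) = -3e^{-2iθ}. -/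
open Complex ComplexConjugate

private lemma habs_aux {F : ℂ × ℂ → ℂ} {F' : ℂ × ℂ →L[ℝ] ℂ} {x : ℂ × ℂ}
    (hF : HasFDerivAt F F' x) (h1 : ‖F x‖ = 1) :
    HasFDerivAt (fun y => ‖F y‖) ((innerSL ℝ (F x)).comp F') x := by
  have h2 : HasFDerivAt (fun y => ‖F y‖ ^ 2) (2 • (innerSL ℝ (F x)).comp F') x := hF.norm_sq
  have h3 : HasDerivAt Real.sqrt (1 / 2) (‖F x‖ ^ 2) := by
    rw [h1]
    simpa using Real.hasDerivAt_sqrt one_ne_zero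
  have h4 := h3.comp_hasFDerivAt x h2
  have heq : (fun y => Real.sqrt (‖F y‖ ^ 2)) = fun y => ‖F y‖ := by
    funext y; rw [Real.sqrt_sq (norm_nonneg _)]
  rw [Function.comp_def, heq] at h4
  have hLeq : ((1 / 2 : ℝ) • (2 • (innerSL ℝ (F x)).comp F'))
      = (innerSL ℝ (F x)).comp F' := by
    refine ContinuousLinearMap.ext fun u => ?_
    simp [ContinuousLinearMap.smul_apply]
    ring
  rw [hLeq] at h4
  exact h4

private lemma wir_aux (w : ℂ) :
    (1 / 2 : ℂ) * (((w.re : ℝ) : ℂ) - Complex.I * (((w * Complex.I).re : ℝ) : ℂ)) = w / 2 := by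
  apply Complex.ext <;> simp [Complex.mul_I_re] <;> ring

/-- The defining function of the symmetrized bidisc is `C¹` near the boundary point
`z₀ = (e^{iθ}, 0)`, and its Wirtinger derivatives there are `3e^{-iθ}` and `-3e^{-2iθ}`. -/
theorem stmt_13 (θ : ℝ) (hθ : θ ∈ Set.Ico 0 (2 * Real.pi))
    (h : ℂ × ℂ → ℝ)
    (hh : ∀ w : ℂ × ℂ,
      h w = 2 * ‖w.1 - conj w.1 * w.2‖ + ‖w.1 ^ 2 - 4 * w.2‖
        + ‖w.1‖ ^ 2 - 4)
    (z₀ : ℂ × ℂ) (hz₀ : z₀ = (Complex.exp (θ * Complex.I), 0)) :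
    ContDiffAt ℝ 1 h z₀ ∧
    (1 / 2 : ℂ) *
        (((fderiv ℝ h z₀ ((1 : ℂ), (0 : ℂ)) : ℝ) : ℂ)
          - Complex.I * ((fderiv ℝ h z₀ (Complex.I, (0 : ℂ)) : ℝ) : ℂ)) =
      3 * Complex.exp (-θ * Complex.I) ∧
    (1 / 2 : ℂ) *
        (((fderiv ℝ h z₀ ((0 : ℂ), (1 : ℂ)) : ℝ) : ℂ)
          - Complex.I * ((fderiv ℝ h z₀ ((0 : ℂ), Complex.I) : ℝ) : ℂ)) =
      -3 * Complex.exp (-2 * θ * Complex.I) := by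
  set s : ℂ := Complex.exp (θ * Complex.I) with hs_def
  have hs1 : ‖s‖ = 1 := by
    simpa [hs_def] using Complex.abs_exp_ofReal_mul_I θ
  have hs0 : s ≠ 0 := Complex.exp_ne_zero _
  have hcs : s * conj s = 1 := by
    rw [Complex.mul_conj, Complex.normSq_eq_norm_sq, hs1]
    norm_num
  -- rewrite h using norms
  have hrw : h = fun w : ℂ × ℂ =>
      2 * ‖w.1 - conj w.1 * w.2‖ + ‖w.1 ^ 2 - 4 * w.2‖ + ‖w.1‖ ^ 2 - 4 := by
    funext w; rw [hh w]
  -- the inner functions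
  set f : ℂ × ℂ → ℂ := fun w => w.1 - conj w.1 * w.2 with hf_def
  set g : ℂ × ℂ → ℂ := fun w => w.1 ^ 2 - 4 * w.2 with hg_def
  have hfz : f z₀ = s := by simp [hf_def, hz₀]
  have hgz : g z₀ = s ^ 2 := by simp [hg_def, hz₀]
  -- ℝ-differentiability of f and g
  have hconj : HasFDerivAt (fun w : ℂ × ℂ => conj w.1)
      ((Complex.conjCLE : ℂ →L[ℝ] ℂ).comp (ContinuousLinearMap.fst ℝ ℂ ℂ)) z₀ :=
    (Complex.conjCLE.hasFDerivAt).comp z₀ (hasFDerivAt_fst)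
  have hmul : HasFDerivAt (fun w : ℂ × ℂ => conj w.1 * w.2)
      ((conj s) • (ContinuousLinearMap.snd ℝ ℂ ℂ) +
        (0 : ℂ) • ((Complex.conjCLE : ℂ →L[ℝ] ℂ).comp (ContinuousLinearMap.fst ℝ ℂ ℂ))) z₀ := by
    have := hconj.mul (hasFDerivAt_snd (𝕜 := ℝ) (p := z₀))
    subst hz₀; exact this
  have hf' : HasFDerivAt f
      ((ContinuousLinearMap.fst ℝ ℂ ℂ) -
        ((conj s) • (ContinuousLinearMap.snd ℝ ℂ ℂ) +
          (0 : ℂ) • ((Complex.conjCLE : ℂ →L[ℝ] ℂ).comp (ContinuousLinearMap.fst ℝ ℂ ℂ)))) z₀ :=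
    (hasFDerivAt_fst).sub hmul
  have hg' : HasFDerivAt g
      ((s • (ContinuousLinearMap.fst ℝ ℂ ℂ) + s • (ContinuousLinearMap.fst ℝ ℂ ℂ)) -
        (4 : ℂ) • (ContinuousLinearMap.snd ℝ ℂ ℂ)) z₀ := by
    have h1 : HasFDerivAt (fun w : ℂ × ℂ => w.1 ^ 2)
        (s • (ContinuousLinearMap.fst ℝ ℂ ℂ) + s • (ContinuousLinearMap.fst ℝ ℂ ℂ)) z₀ := by
      have hsq : (fun w : ℂ × ℂ => w.1 ^ 2) = fun w : ℂ × ℂ => w.1 * w.1 := by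
        funext w; ring
      rw [hsq]
      have := (hasFDerivAt_fst (𝕜 := ℝ) (p := z₀)).mul (hasFDerivAt_fst (𝕜 := ℝ) (p := z₀))
      subst hz₀; exact this
    have h2 : HasFDerivAt (fun w : ℂ × ℂ => (4 : ℂ) * w.2)
        ((4 : ℂ) • (ContinuousLinearMap.snd ℝ ℂ ℂ)) z₀ :=
      (hasFDerivAt_snd).const_mul 4
    exact h1.sub h2
  -- norms of values
  have hfn : ‖f z₀‖ = 1 := by rw [hfz]; exact hs1
  have hgn : ‖g z₀‖ = 1 := by rw [hgz, norm_pow, hs1]; norm_num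
  -- derivatives of abs pieces
  have hA := habs_aux hf' hfn
  have hB := habs_aux hg' hgn
  have hC : HasFDerivAt (fun w : ℂ × ℂ => ‖w.1‖ ^ 2)
      (2 • (innerSL ℝ s).comp (ContinuousLinearMap.fst ℝ ℂ ℂ)) z₀ := by
    have := (hasFDerivAt_fst (𝕜 := ℝ) (p := z₀)).norm_sq
    simpa [hz₀] using this
  -- total derivative
  have hH : HasFDerivAt h
      ((2 : ℝ) • ((innerSL ℝ (f z₀)).comp
          ((ContinuousLinearMap.fst ℝ ℂ ℂ) -
            ((conj s) • (ContinuousLinearMap.snd ℝ ℂ ℂ) +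
              (0 : ℂ) • ((Complex.conjCLE : ℂ →L[ℝ] ℂ).comp (ContinuousLinearMap.fst ℝ ℂ ℂ)))))
        + (innerSL ℝ (g z₀)).comp
            ((s • (ContinuousLinearMap.fst ℝ ℂ ℂ) + s • (ContinuousLinearMap.fst ℝ ℂ ℂ)) -
              (4 : ℂ) • (ContinuousLinearMap.snd ℝ ℂ ℂ))
        + 2 • (innerSL ℝ s).comp (ContinuousLinearMap.fst ℝ ℂ ℂ)) z₀ := by
    rw [hrw]
    exact (((hA.const_mul 2).add hB).add hC).sub_const 4
  have hfd : fderiv ℝ h z₀ = _ := hH.fderiv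
  have hval : ∀ u v : ℂ, fderiv ℝ h z₀ (u, v)
      = (6 * (conj s * u) - 6 * (conj s ^ 2 * v)).re := by
    intro u v
    rw [hfd]
    simp only [ContinuousLinearMap.add_apply, ContinuousLinearMap.smul_apply,
      ContinuousLinearMap.coe_smul', Pi.smul_apply, ContinuousLinearMap.comp_apply,
      ContinuousLinearMap.sub_apply, ContinuousLinearMap.coe_fst', ContinuousLinearMap.coe_snd',
      innerSL_apply_apply, hfz, hgz, Complex.inner, smul_eq_mul, zero_mul, zero_smul, add_zero,
      nsmul_eq_mul, Nat.cast_ofNat]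
    have e1 : (s * u + s * u - 4 * v) * conj (s ^ 2)
        = 2 * (conj s * u) - 4 * (conj s ^ 2 * v) := by
      rw [map_pow]
      linear_combination (2 * conj s * u) * hcs
    have e2 : (u - conj s * v) * conj s = conj s * u - conj s ^ 2 * v := by ring
    rw [e1, e2]
    simp only [Complex.sub_re, Complex.add_re, Complex.mul_re, Complex.re_ofNat,
      Complex.im_ofNat]
    ring
  have hexp1 : Complex.exp (-θ * Complex.I) = conj s := by
    rw [hs_def, ← Complex.exp_conj]
    congr 1
    simp [Complex.conj_ofReal]
  have hexp2 : Complex.exp (-2 * θ * Complex.I) = conj s ^ 2 := by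
    rw [← hexp1, ← Complex.exp_nat_mul]
    congr 1
    push_cast
    ring
  refine ⟨?_, ?_, ?_⟩
  · -- ContDiffAt
    rw [hrw]
    have hcf : ContDiffAt ℝ 1 f z₀ :=
      contDiffAt_fst.sub
        ((Complex.conjCLE.contDiff.contDiffAt.comp z₀ contDiffAt_fst).mul contDiffAt_snd)
    have hcg : ContDiffAt ℝ 1 g z₀ :=
      (contDiffAt_fst.pow 2).sub (contDiffAt_const.mul contDiffAt_snd)
    have h1 : ContDiffAt ℝ 1 (fun w : ℂ × ℂ => ‖f w‖) z₀ :=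
      hcf.norm ℝ (by rw [hfz]; exact hs0)
    have h2 : ContDiffAt ℝ 1 (fun w : ℂ × ℂ => ‖g w‖) z₀ :=
      hcg.norm ℝ (by rw [hgz]; exact pow_ne_zero _ hs0)
    have h3 : ContDiffAt ℝ 1 (fun w : ℂ × ℂ => ‖w.1‖ ^ 2) z₀ :=
      contDiffAt_fst.norm_sq ℝ
    exact (((contDiffAt_const.mul h1).add h2).add h3).sub contDiffAt_const
  · have w1 : fderiv ℝ h z₀ ((1 : ℂ), (0 : ℂ)) = (6 * conj s).re := by
      rw [hval]; congr 1; ring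
    have w2 : fderiv ℝ h z₀ (Complex.I, (0 : ℂ)) = ((6 * conj s) * Complex.I).re := by
      rw [hval]; congr 1; ring
    rw [w1, w2, wir_aux (6 * conj s), hexp1]
    ring
  · have w1 : fderiv ℝ h z₀ ((0 : ℂ), (1 : ℂ)) = (-6 * conj s ^ 2).re := by
      rw [hval]; congr 1; ring
    have w2 : fderiv ℝ h z₀ ((0 : ℂ), Complex.I) = ((-6 * conj s ^ 2) * Complex.I).re := by
      rw [hval]; congr 1; ring
    rw [w1, w2, wir_aux (-6 * conj s ^ 2), hexp2]
    ring
end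

section
/- Let f = (f₁,f₂) : G₂ → G₂ be holomorphic, let θ ∈ [0,2π), and z₀ = (e^{iθ}, 0) ∈ ∂G₂. Suppose f extends holomorphically to a neighborhood of z₀ and f(z₀) = z₀. Then λ := ∂f₁/∂s(z₀) - e^{-iθ}∂f₂/∂s(z₀) is real and satisfies λ ≥ (1/2)·|1 - ḡ(0)|²/(1 - |g(0)|²) > 0, where g(0) = e^{-2iθ}(e^{iθ}f₁(0,0) - 2f₂(0,0))/(2 - e^{-iθ}f₁(0,0)). -/
open Complex ComplexConjugate Metric Set Filter

lemma aux_halfplane {w : ℂ} (hw : ‖w‖ < 1) :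
    Complex.normSq (1 - w) < 2 * (1 - w).re := by
  have h : Complex.normSq w < 1 := by
    rw [← Complex.sq_norm]; nlinarith [norm_nonneg w]
  simp only [Complex.normSq_apply, Complex.sub_re, Complex.sub_im, Complex.one_re,
    Complex.one_im] at *
  nlinarith

lemma aux_strict {a b : ℂ} (ha : Complex.normSq a < 2 * a.re) (hb : Complex.normSq b < 2 * b.re) :
    Complex.normSq (a + b - 2 * (a * b)) < Complex.normSq (a + b) := by
  obtain ⟨x, y⟩ := a
  obtain ⟨u, v⟩ := b
  simp only [Complex.normSq_apply, Complex.add_re, Complex.add_im, Complex.sub_re, Complex.sub_im,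
    Complex.mul_re, Complex.mul_im, Complex.re_ofNat, Complex.im_ofNat] at *
  have hx : 0 < x := by nlinarith [sq_nonneg y]
  have hu : 0 < u := by nlinarith [sq_nonneg v]
  have hp : 0 < x^2 + y^2 := by positivity
  nlinarith [mul_pos hp (show (0:ℝ) < 2*u - (u^2+v^2) by nlinarith),
    mul_nonneg (show (0:ℝ) ≤ u^2+v^2 by positivity) (show (0:ℝ) ≤ 2*x - (x^2+y^2) by nlinarith)]

lemma aux_abs_lt {x y : ℂ} (h : Complex.normSq x < Complex.normSq y) :
    ‖x‖ < ‖y‖ := by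
  have h1 := Complex.sq_norm x
  have h2 := Complex.sq_norm y
  nlinarith [norm_nonneg x, norm_nonneg y]

lemma aux_mobius_normSq (a w : ℂ) :
    Complex.normSq (1 - conj a * w) - Complex.normSq (w - a)
      = (1 - Complex.normSq a) * (1 - Complex.normSq w) := by
  simp only [Complex.normSq_apply, Complex.sub_re, Complex.sub_im, Complex.mul_re, Complex.mul_im,
    Complex.one_re, Complex.one_im, Complex.conj_re, Complex.conj_im]
  ring

lemma aux_mobius {a w : ℂ} (ha : ‖a‖ < 1) (hw : ‖w‖ < 1) :
    ‖(w - a) / (1 - conj a * w)‖ < 1 := by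
  have hna : Complex.normSq a < 1 := by rw [← Complex.sq_norm]; nlinarith [norm_nonneg a]
  have hnw : Complex.normSq w < 1 := by rw [← Complex.sq_norm]; nlinarith [norm_nonneg w]
  have key := aux_mobius_normSq a w
  have hlt : Complex.normSq (w - a) < Complex.normSq (1 - conj a * w) := by nlinarith
  have hden : (0:ℝ) < Complex.normSq (1 - conj a * w) := by
    have := Complex.normSq_nonneg (w - a); linarith
  rw [norm_div, div_lt_one]
  · exact aux_abs_lt hlt
  · exact norm_pos_iff.mpr (by rwa [Complex.normSq_pos] at hden)

lemma aux_normSq_deriv {u : ℝ → ℂ} {u' : ℂ} {x : ℝ} (h : HasDerivAt u u' x) :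
    HasDerivAt (fun r => Complex.normSq (u r)) (2 * (u' * conj (u x)).re) x := by
  have hre : HasDerivAt (fun r => (u r).re) u'.re x :=
    (Complex.reCLM.hasFDerivAt.comp_hasDerivAt x h)
  have him : HasDerivAt (fun r => (u r).im) u'.im x :=
    (Complex.imCLM.hasFDerivAt.comp_hasDerivAt x h)
  have := ((hre.mul hre).add (him.mul him))
  have heq : (fun r => Complex.normSq (u r))
      = fun x => (u x).re * (u x).re + (u x).im * (u x).im := by
    funext r; simp [Complex.normSq_apply]
  rw [heq]
  refine this.congr_deriv ?_
  simp only [Complex.mul_re, Complex.conj_re, Complex.conj_im]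
  ring

lemma aux_G2 {ω : ℂ} (hω : ‖ω‖ = 1) {s p : ℂ} (h : (s, p) ∈ G2) :
    ‖s - 2 * (ω * p)‖ < ‖2 - ω * s‖ ∧ 0 < (2 - ω * s).re := by
  obtain ⟨z₁, z₂, h1, h2, heq⟩ := h
  rw [Prod.ext_iff] at heq
  obtain ⟨hs, hp⟩ := heq
  simp only at hs hp
  subst hs; subst hp
  have hw1 : ‖ω * z₁‖ < 1 := by rw [norm_mul, hω, one_mul]; exact h1
  have hw2 : ‖ω * z₂‖ < 1 := by rw [norm_mul, hω, one_mul]; exact h2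
  have ha := aux_halfplane hw1
  have hb := aux_halfplane hw2
  set a := 1 - ω * z₁ with hadef
  set b := 1 - ω * z₂ with hbdef
  have e2 : (2:ℂ) - ω * (z₁ + z₂) = a + b := by rw [hadef, hbdef]; ring
  constructor
  · have key := aux_strict ha hb
    have e1 : ω * ((z₁ + z₂) - 2 * (ω * (z₁ * z₂))) = a + b - 2 * (a * b) := by
      rw [hadef, hbdef]; ring
    have : ‖ω * ((z₁ + z₂) - 2 * (ω * (z₁ * z₂)))‖ < ‖a + b‖ := by
      rw [e1]; exact aux_abs_lt key
    rw [norm_mul, hω, one_mul] at this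
    rwa [e2]
  · rw [e2]
    have := Complex.normSq_nonneg a
    have := Complex.normSq_nonneg b
    simp only [Complex.add_re]
    linarith

lemma aux_slope_nonpos {q : ℝ → ℝ} {D : ℝ} (hq : HasDerivAt q D 1) (hq1 : q 1 = 0)
    (hqn : ∀ r, 0 < r → r < 1 → 0 ≤ q r) : D ≤ 0 := by
  have hsl : Filter.Tendsto (slope q 1) (nhdsWithin 1 (Iio 1)) (nhds D) :=
    (hasDerivAt_iff_tendsto_slope.mp hq).mono_left
      (nhdsWithin_mono 1 (fun x hx => ne_of_lt hx))
  refine le_of_tendsto hsl ?_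
  filter_upwards [Ioo_mem_nhdsLT_of_mem (show (1:ℝ) ∈ Ioc 0 1 by norm_num)] with r hr
  rw [slope_def_field, hq1, sub_zero]
  exact div_nonpos_of_nonneg_of_nonpos (hqn r hr.1 hr.2) (by linarith [hr.2])

theorem stmt_14 (θ : ℝ) (hθ : θ ∈ Set.Ico 0 (2 * Real.pi))
    (f : ℂ × ℂ → ℂ × ℂ)
    (hd : DifferentiableOn ℂ f G2) (hmaps : Set.MapsTo f G2 G2)
    (z₀ : ℂ × ℂ) (hz₀ : z₀ = (Complex.exp (θ * Complex.I), 0))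
    (hext : ∀ᶠ w in nhds z₀, DifferentiableAt ℂ f w)
    (hfix : f z₀ = z₀)
    (g0 : ℂ)
    (hg0 : g0 = Complex.exp (-2 * θ * Complex.I) *
        (Complex.exp (θ * Complex.I) * (f (0, 0)).1 - 2 * (f (0, 0)).2) /
          (2 - Complex.exp (-θ * Complex.I) * (f (0, 0)).1)) :
    ∃ lam : ℝ,
      (lam : ℂ) =
          fderiv ℂ (fun w => (f w).1) z₀ (1, 0)
            - Complex.exp (-θ * Complex.I) * fderiv ℂ (fun w => (f w).2) z₀ (1, 0) ∧
      (1 / 2) * ‖1 - conj g0‖ ^ 2 / (1 - ‖g0‖ ^ 2) ≤ lam ∧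
      0 < (1 / 2) * ‖1 - conj g0‖ ^ 2 / (1 - ‖g0‖ ^ 2) := by
  subst hz₀
  set e : ℂ := Complex.exp (θ * Complex.I) with he
  set ω : ℂ := Complex.exp (-θ * Complex.I) with hω
  have hωe : ω * e = 1 := by
    rw [he, hω, ← Complex.exp_add, neg_mul, neg_add_cancel, Complex.exp_zero]
  have hωabs : ‖ω‖ = 1 := by
    rw [hω]; simp [Complex.norm_exp]
  have heabs : ‖e‖ = 1 := by
    rw [he]; simp [Complex.norm_exp]
  have hω0 : ω ≠ 0 := by
    intro hc; rw [hc] at hωabs; simp at hωabs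
  have hei : e = ω⁻¹ := eq_inv_of_mul_eq_one_left (by rw [mul_comm]; exact hωe)
  -- the curve and composed functions
  set F : ℂ → ℂ × ℂ := fun ξ => f (ξ * e, 0) with hF
  set g : ℂ → ℂ := fun ξ =>
    ω ^ 2 * (e * (F ξ).1 - 2 * (F ξ).2) / (2 - ω * (F ξ).1) with hg
  have hγmem : ∀ ξ : ℂ, ‖ξ‖ < 1 → ((ξ * e, 0) : ℂ × ℂ) ∈ G2 := by
    intro ξ h
    exact ⟨ξ * e, 0, by rwa [norm_mul, heabs, mul_one], by norm_num, by simp⟩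
  have hFmem : ∀ ξ : ℂ, ‖ξ‖ < 1 → F ξ ∈ G2 := fun ξ h => hmaps (hγmem ξ h)
  have hkey : ∀ ξ : ℂ, ‖ξ‖ < 1 →
      ‖(F ξ).1 - 2 * (ω * (F ξ).2)‖ < ‖2 - ω * (F ξ).1‖ ∧
        0 < (2 - ω * (F ξ).1).re := by
    intro ξ h
    exact aux_G2 hωabs (show ((F ξ).1, (F ξ).2) ∈ G2 by rw [Prod.mk.eta]; exact hFmem ξ h)
  have hden0 : ∀ ξ : ℂ, ‖ξ‖ < 1 → (2 - ω * (F ξ).1) ≠ 0 := by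
    intro ξ h hc
    have := (hkey ξ h).2
    rw [hc] at this; simp at this
  have hgabs : ∀ ξ : ℂ, ‖ξ‖ < 1 → ‖g ξ‖ < 1 := by
    intro ξ h
    obtain ⟨h1, h2⟩ := hkey ξ h
    rw [hg]
    simp only []
    rw [norm_div, div_lt_one (norm_pos_iff.mpr (hden0 ξ h))]
    have h3 : ω ^ 2 * (e * (F ξ).1 - 2 * (F ξ).2)
        = ω * ((ω * e) * (F ξ).1 - 2 * (ω * (F ξ).2)) := by ring
    rw [h3, hωe, one_mul, norm_mul, hωabs, one_mul]
    exact h1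
  -- differentiability on the disc
  have hγdiff : Differentiable ℂ (fun ξ : ℂ => ((ξ * e, 0) : ℂ × ℂ)) :=
    (differentiable_id.mul_const e).prodMk (differentiable_const 0)
  have hFdiff : DifferentiableOn ℂ F (ball (0:ℂ) 1) := by
    apply hd.comp hγdiff.differentiableOn
    intro ξ hξ
    exact hγmem ξ (by simpa using mem_ball_zero_iff.mp hξ)
  have hballabs : ∀ ξ : ℂ, ξ ∈ ball (0:ℂ) 1 → ‖ξ‖ < 1 := by
    intro ξ hξ
    simpa using mem_ball_zero_iff.mp hξ
  have hgdiff : DifferentiableOn ℂ g (ball (0:ℂ) 1) := by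
    apply DifferentiableOn.div
    · exact (differentiableOn_const _).mul
        (((differentiableOn_const e).mul hFdiff.fst).sub
          ((differentiableOn_const 2).mul hFdiff.snd))
    · exact (differentiableOn_const 2).sub ((differentiableOn_const ω).mul hFdiff.fst)
    · intro ξ hξ; exact hden0 ξ (hballabs ξ hξ)
  -- value at 0 and 1
  have hF0 : F 0 = f (0, 0) := by rw [hF]; norm_num
  have hg00 : g 0 = g0 := by
    rw [hg0, hg]
    simp only []
    rw [hF0]
    congr 2
    rw [hω, sq, ← Complex.exp_add]
    congr 1
    ring
  have hF1 : F 1 = (e, 0) := by rw [hF]; simpa using hfix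
  have hg1 : g 1 = 1 := by
    rw [hg]
    simp only [hF1]
    rw [show ω ^ 2 * (e * e - 2 * 0) = (ω * e) * (ω * e) by ring, hωe]
    norm_num
  have hg0abs : ‖g0‖ < 1 := by rw [← hg00]; exact hgabs 0 (by norm_num)
  -- Möbius transform of g and the Schwarz lemma
  have hmobden : ∀ ξ : ℂ, ‖ξ‖ < 1 → (1 - conj g0 * g ξ) ≠ 0 := by
    intro ξ h hc
    have h1 : ‖conj g0 * g ξ‖ < 1 := by
      rw [norm_mul, Complex.norm_conj]
      calc ‖g0‖ * ‖g ξ‖ ≤ 1 * ‖g ξ‖ := by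
            apply mul_le_mul_of_nonneg_right hg0abs.le (norm_nonneg _)
        _ < 1 := by rw [one_mul]; exact hgabs ξ h
    have : conj g0 * g ξ = 1 := by linear_combination -hc
    rw [this] at h1; simp at h1
  have hhdiff : DifferentiableOn ℂ (fun ξ => (g ξ - g0) / (1 - conj g0 * g ξ))
      (ball (0:ℂ) 1) := by
    apply DifferentiableOn.div
    · exact hgdiff.sub (differentiableOn_const g0)
    · exact (differentiableOn_const 1).sub ((differentiableOn_const (conj g0)).mul hgdiff)
    · intro ξ hξ; exact hmobden ξ (hballabs ξ hξ)
  have hhmaps : MapsTo (fun ξ => (g ξ - g0) / (1 - conj g0 * g ξ))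
      (ball (0:ℂ) 1) (ball (0:ℂ) 1) := by
    intro ξ hξ
    rw [mem_ball_zero_iff]
    exact aux_mobius hg0abs (hgabs ξ (hballabs ξ hξ))
  have hh0 : (fun ξ => (g ξ - g0) / (1 - conj g0 * g ξ)) 0 = 0 := by
    simp only [hg00, sub_self, zero_div]
  have schwarz : ∀ r : ℝ, 0 < r → r < 1 →
      Complex.normSq (g r - g0) ≤ r ^ 2 * Complex.normSq (1 - conj g0 * g r) := by
    intro r h0 h1
    have habs_r : ‖(r : ℂ)‖ = r := by
      rw [Complex.norm_real, Real.norm_eq_abs, abs_of_pos h0]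
    have hS := Complex.norm_le_norm_of_mapsTo_ball hhdiff (hhmaps.mono_right ball_subset_closedBall) hh0
      (z := (r : ℂ)) (by rw [habs_r]; exact h1)
    rw [habs_r] at hS
    simp only [norm_div] at hS
    have hdne : (0:ℝ) < ‖1 - conj g0 * g r‖ :=
      norm_pos_iff.mpr (hmobden r (by rw [habs_r]; exact h1))
    rw [div_le_iff₀ hdne] at hS
    have e1 := Complex.sq_norm (g r - g0)
    have e2 := Complex.sq_norm (1 - conj g0 * g r)
    nlinarith [norm_nonneg (g (r:ℂ) - g0), norm_nonneg (1 - conj g0 * g (r:ℂ))]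
  -- derivative data at the fixed point
  have hfz : DifferentiableAt ℂ f (e, 0) := hext.self_of_nhds
  set L := fderiv ℂ f (e, 0) with hL
  have hLf : HasFDerivAt f L (e, 0) := hfz.hasFDerivAt
  set A : ℂ := (L (1, 0)).1 with hA
  set B : ℂ := (L (1, 0)).2 with hB
  have hAval : fderiv ℂ (fun w => (f w).1) (e, 0) (1, 0) = A := by
    rw [hLf.fst.fderiv]; rfl
  have hBval : fderiv ℂ (fun w => (f w).2) (e, 0) (1, 0) = B := by
    rw [hLf.snd.fderiv]; rfl
  have hLe : L (e, 0) = (e * A, e * B) := by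
    have h1 : ((e, 0) : ℂ × ℂ) = e • ((1 : ℂ), (0 : ℂ)) := by
      simp [Prod.smul_mk, smul_eq_mul]
    rw [h1, L.map_smul]
    rw [Prod.ext_iff]
    constructor
    · simp [smul_eq_mul, hA]
    · simp [smul_eq_mul, hB]
  have hγ' : HasDerivAt (fun ξ : ℂ => ((ξ * e, 0) : ℂ × ℂ)) ((e, 0) : ℂ × ℂ) 1 := by
    apply HasDerivAt.prodMk
    · simpa using (hasDerivAt_id (1:ℂ)).mul_const e
    · exact hasDerivAt_const 1 0
  have hF' : HasDerivAt F (L (e, 0)) 1 := by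
    have h1 : HasFDerivAt f L ((fun ξ : ℂ => ((ξ * e, 0) : ℂ × ℂ)) 1) := by
      simpa using hLf
    exact h1.comp_hasDerivAt 1 hγ'
  have hF1' : HasDerivAt (fun ξ => (F ξ).1) (e * A) 1 := by
    have := (ContinuousLinearMap.fst ℂ ℂ ℂ).hasFDerivAt.comp_hasDerivAt 1 hF'
    rw [hLe] at this; exact this
  have hF2' : HasDerivAt (fun ξ => (F ξ).2) (e * B) 1 := by
    have := (ContinuousLinearMap.snd ℂ ℂ ℂ).hasFDerivAt.comp_hasDerivAt 1 hF'
    rw [hLe] at this; exact this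
  set lamC : ℂ := A - ω * B with hlamC
  have hg' : HasDerivAt g (2 * lamC) 1 := by
    have hNum : HasDerivAt (fun ξ => ω ^ 2 * (e * (F ξ).1 - 2 * (F ξ).2))
        (ω ^ 2 * (e * (e * A) - 2 * (e * B))) 1 :=
      ((hF1'.const_mul e).sub (hF2'.const_mul 2)).const_mul (ω ^ 2)
    have hDen : HasDerivAt (fun ξ => 2 - ω * (F ξ).1) (-(ω * (e * A))) 1 :=
      (hF1'.const_mul ω).const_sub 2
    have hD1 : (2 - ω * (F 1).1) ≠ 0 := by
      rw [hF1]
      simp only []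
      rw [show ω * e = 1 from hωe]
      norm_num
    have hq := hNum.div hDen hD1
    rw [hg]
    refine HasDerivAt.congr_deriv hq (Eq.symm ?_)
    rw [hlamC, hF1]
    simp only []
    rw [show (2:ℂ) - ω * e = 1 by rw [hωe]; norm_num]
    rw [one_pow, div_one]
    linear_combination (2 * ω * B - A * ((ω * e) ^ 2 + 2 * (ω * e) + 2)) * hωe
  -- continuity/differentiability of g in a neighbourhood of 1
  have htend : Tendsto (fun ξ : ℂ => ((ξ * e, 0) : ℂ × ℂ)) (nhds 1) (nhds (e, 0)) := by
    have := hγdiff.continuous.tendsto (1 : ℂ)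
    simpa using this
  have hFd : ∀ᶠ ξ in nhds (1:ℂ), DifferentiableAt ℂ F ξ := by
    filter_upwards [htend.eventually hext] with ξ hξ
    exact DifferentiableAt.comp ξ hξ (hγdiff ξ)
  have hD1ne : (2 - ω * (F 1).1) ≠ 0 := by
    rw [hF1]
    simp only []
    rw [show ω * e = 1 from hωe]
    norm_num
  have hDne : ∀ᶠ ξ in nhds (1:ℂ), (2 - ω * (F ξ).1) ≠ 0 := by
    have hDcont : ContinuousAt (fun ξ => 2 - ω * (F ξ).1) 1 :=
      continuousAt_const.sub
        (continuousAt_const.mul (hF'.differentiableAt.continuousAt.fst))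
    exact hDcont.eventually_ne hD1ne
  have hgd : ∀ᶠ ξ in nhds (1:ℂ), DifferentiableAt ℂ g ξ := by
    filter_upwards [hFd, hDne] with ξ h1 h2
    rw [hg]
    exact (((differentiableAt_const _).mul
      (((differentiableAt_const e).mul h1.fst).sub
        ((differentiableAt_const 2).mul h1.snd))).div
      ((differentiableAt_const 2).sub ((differentiableAt_const ω).mul h1.fst)) h2)
  have hgc : ∀ᶠ ξ in nhds (1:ℂ), ContinuousAt g ξ := hgd.mono fun ξ h => h.continuousAt
  -- the boundary curve t ↦ exp(t i)
  have hcirc : Tendsto (fun t : ℝ => Complex.exp (t * Complex.I)) (nhds 0) (nhds 1) := by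
    have hc : Continuous fun t : ℝ => Complex.exp (t * Complex.I) := by
      apply Complex.continuous_exp.comp
      exact (Complex.continuous_ofReal.mul continuous_const)
    have := hc.tendsto 0
    simpa using this
  have hφpos : ∀ᶠ t : ℝ in nhds 0,
      0 ≤ 1 - Complex.normSq (g (Complex.exp (t * Complex.I))) := by
    filter_upwards [hcirc.eventually hgc] with t hct
    have hmem : Complex.exp ((t:ℂ) * Complex.I) ∈ closure (ball (0:ℂ) 1) := by
      rw [closure_ball (0:ℂ) one_ne_zero, mem_closedBall_zero_iff]
      simp [Complex.norm_exp]
    haveI hnb : (nhdsWithin (Complex.exp ((t:ℂ) * Complex.I)) (ball (0:ℂ) 1)).NeBot :=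
      mem_closure_iff_nhdsWithin_neBot.mp hmem
    have htd : Tendsto g (nhdsWithin (Complex.exp ((t:ℂ) * Complex.I)) (ball (0:ℂ) 1))
        (nhds (g (Complex.exp ((t:ℂ) * Complex.I)))) := hct.continuousWithinAt
    have hle : ‖g (Complex.exp ((t:ℂ) * Complex.I))‖ ≤ 1 := by
      apply le_of_tendsto (continuous_norm.continuousAt.tendsto.comp htd)
      filter_upwards [self_mem_nhdsWithin] with ξ hξ
      exact (hgabs ξ (hballabs ξ hξ)).le
    have hsq := Complex.sq_norm (g (Complex.exp ((t:ℂ) * Complex.I)))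
    nlinarith [norm_nonneg (g (Complex.exp ((t:ℂ) * Complex.I)))]
  -- derivative of t ↦ g (exp (t i)) at 0
  have hE' : HasDerivAt (fun t : ℝ => g (Complex.exp (t * Complex.I)))
      (2 * lamC * Complex.I) 0 := by
    have hinner : HasDerivAt (fun z : ℂ => Complex.exp (z * Complex.I)) Complex.I 0 := by
      have h1 : HasDerivAt (fun z : ℂ => z * Complex.I) Complex.I 0 := by
        simpa using (hasDerivAt_id (0:ℂ)).mul_const Complex.I
      have h2 := (Complex.hasDerivAt_exp ((0:ℂ) * Complex.I)).comp 0 h1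
      exact h2.congr_deriv (by simp)
    have houter : HasDerivAt g (2 * lamC) (Complex.exp ((0:ℂ) * Complex.I)) := by
      rw [show ((0:ℂ) * Complex.I) = 0 by ring, Complex.exp_zero]
      exact hg'
    have hcompC : HasDerivAt (fun z : ℂ => g (Complex.exp (z * Complex.I)))
        (2 * lamC * Complex.I) 0 := by
      have := houter.comp 0 hinner
      exact this.congr_deriv (by simp)
    have h0 : HasDerivAt (fun z : ℂ => g (Complex.exp (z * Complex.I)))
        (2 * lamC * Complex.I) (((0:ℝ) : ℂ)) := by simpa using hcompC
    exact h0.comp_ofReal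
  have hg1' : g (Complex.exp (((0:ℝ):ℂ) * Complex.I)) = 1 := by
    rw [show (((0:ℝ):ℂ) * Complex.I) = 0 by norm_num, Complex.exp_zero, hg1]
  -- imaginary part of lamC vanishes
  have him : lamC.im = 0 := by
    have hφ' : HasDerivAt (fun t : ℝ => 1 - Complex.normSq (g (Complex.exp (t * Complex.I))))
        (-(2 * ((2 * lamC * Complex.I) *
          conj (g (Complex.exp (((0:ℝ):ℂ) * Complex.I)))).re)) 0 :=
      (aux_normSq_deriv hE').const_sub 1
    have hlocmin : IsLocalMin
        (fun t : ℝ => 1 - Complex.normSq (g (Complex.exp (t * Complex.I)))) 0 := by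
      rw [IsLocalMin, IsMinFilter]
      filter_upwards [hφpos] with t ht
      rw [hg1']
      simpa using ht
    have hd0 := hlocmin.deriv_eq_zero
    rw [hφ'.deriv, hg1'] at hd0
    simp only [map_one, mul_one, Complex.mul_re, Complex.I_re, Complex.I_im, mul_zero,
      mul_one, Complex.mul_im, Complex.re_ofNat, Complex.im_ofNat] at hd0
    linarith
  -- real part inequality via Julia-type slope argument
  have hgr1 : g (((1:ℝ):ℂ)) = 1 := by
    rw [Complex.ofReal_one, hg1]
  have hG' : HasDerivAt (fun r : ℝ => g r) (2 * lamC) 1 := by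
    have h1 : HasDerivAt g (2 * lamC) (((1:ℝ):ℂ)) := by simpa using hg'
    exact h1.comp_ofReal
  have hu1 : HasDerivAt (fun r : ℝ => 1 - conj g0 * g r) (-(conj g0 * (2 * lamC))) 1 :=
    (hG'.const_mul (conj g0)).const_sub 1
  have hu2 : HasDerivAt (fun r : ℝ => g r - g0) (2 * lamC) 1 := hG'.sub_const g0
  have hn1 := aux_normSq_deriv hu1
  have hn2 := aux_normSq_deriv hu2
  have hpow : HasDerivAt (fun r : ℝ => r ^ 2) (↑2 * (1:ℝ) ^ (2-1)) 1 := hasDerivAt_pow 2 1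
  have hq' := (hpow.mul hn1).sub hn2
  have hq1 : (fun r : ℝ => r ^ 2 * Complex.normSq (1 - conj g0 * g ↑r)
      - Complex.normSq (g ↑r - g0)) 1 = 0 := by
    simp only []
    rw [hgr1, one_pow, one_mul, mul_one]
    rw [show (1:ℂ) - conj g0 = conj (1 - g0) by rw [map_sub, map_one], Complex.normSq_conj]
    ring
  have hqn : ∀ r : ℝ, 0 < r → r < 1 →
      0 ≤ (fun r : ℝ => r ^ 2 * Complex.normSq (1 - conj g0 * g ↑r)
        - Complex.normSq (g ↑r - g0)) r := by
    intro r h0 h1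
    simp only []
    have := schwarz r h0 h1
    linarith
  have hQle := aux_slope_nonpos hq' hq1 hqn
  have hre2 : Complex.normSq (1 - g0) ≤ (1 - Complex.normSq g0) * (2 * lamC.re) := by
    rw [hgr1] at hQle
    simp only [mul_one, one_pow, pow_one, Nat.cast_ofNat] at hQle
    simp only [Complex.normSq_apply, Complex.mul_re, Complex.mul_im, Complex.sub_re,
      Complex.sub_im, Complex.one_re, Complex.one_im, Complex.conj_re, Complex.conj_im,
      Complex.neg_re, Complex.neg_im, Complex.re_ofNat, Complex.im_ofNat] at hQle ⊢
    nlinarith [hQle]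
  -- final assembly
  have hn : Complex.normSq g0 < 1 := by
    rw [← Complex.sq_norm]; nlinarith [norm_nonneg g0]
  have hg0ne : (1:ℂ) - g0 ≠ 0 := by
    intro hc
    have hc1 : g0 = 1 := by linear_combination -hc
    rw [hc1] at hg0abs; simp at hg0abs
  have hm : 0 < Complex.normSq (1 - g0) := Complex.normSq_pos.mpr hg0ne
  have habs1 : ‖1 - conj g0‖ ^ 2 = Complex.normSq (1 - g0) := by
    rw [Complex.sq_norm, show (1:ℂ) - conj g0 = conj (1 - g0) by rw [map_sub, map_one],
      Complex.normSq_conj]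
  have habs2 : ‖g0‖ ^ 2 = Complex.normSq g0 := Complex.sq_norm g0
  clear_value lamC A B L
  refine ⟨lamC.re, ?_, ?_, ?_⟩
  · rw [hAval, hBval, ← hlamC]
    exact Complex.ext (by simp) (by simp [him])
  · rw [habs1, habs2, div_le_iff₀ (by linarith)]
    nlinarith [hre2, hm, hn]
  · rw [habs1, habs2]
    apply div_pos
    · exact mul_pos (by norm_num) hm
    · linarith
end

section
/- Let f = (f₁,f₂) : G₂ → G₂ be holomorphic with f(0,0) = (0,0), and let z₀ = (2α, α²) with |α| = 1. If f extends holomorphically to a neighborhood of z₀ and f(z₀) = z₀, then λ := ∂f₁/∂s(z₀) + α·∂f₁/∂p(z₀) equals ᾱ·∂f₂/∂s(z₀) + ∂f₂/∂p(z₀), is real, and λ ≥ 1; moreover (1, α)' is an eigenvector of the Jacobian J_f(z₀) with eigenvalue λ. -/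
open Complex ComplexConjugate Metric Set

-- Lemma 1: the "magic function" numerator/denominator inequality
lemma magic_aux (a b : ℂ) (ha : ‖a‖ < 1) (hb : ‖b‖ < 1) :
    ‖2*a*b - a - b‖ < ‖2 - a - b‖ := by
  have hna : normSq a < 1 := by
    have := Complex.sq_norm a
    nlinarith [norm_nonneg a]
  have hnb : normSq b < 1 := by
    have := Complex.sq_norm b
    nlinarith [norm_nonneg b]
  have key : normSq (2 - a - b) - normSq (2*a*b - a - b)
      = 4*(1 - normSq a * normSq b - a.re*(1 - normSq b) - b.re*(1 - normSq a)) := by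
    simp only [Complex.normSq_apply, Complex.sub_re, Complex.sub_im, Complex.mul_re,
      Complex.mul_im, Complex.re_ofNat, Complex.im_ofNat]
    ring
  have hua : a.re^2 ≤ normSq a := by
    simp only [Complex.normSq_apply]; nlinarith [sq_nonneg a.im]
  have hub : b.re^2 ≤ normSq b := by
    simp only [Complex.normSq_apply]; nlinarith [sq_nonneg b.im]
  have hlt : normSq (2*a*b - a - b) < normSq (2 - a - b) := by
    nlinarith [mul_pos (sub_pos.2 hna) (sub_pos.2 hnb),
      mul_nonneg (sub_pos.2 hnb).le (sq_nonneg (1 - a.re)),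
      mul_nonneg (sub_pos.2 hna).le (sq_nonneg (1 - b.re)),
      mul_nonneg (sub_pos.2 hnb).le (sub_nonneg.2 hua),
      mul_nonneg (sub_pos.2 hna).le (sub_nonneg.2 hub)]
  rw [Complex.norm_def, Complex.norm_def]
  exact Real.sqrt_lt_sqrt (normSq_nonneg _) hlt

lemma magic (ω : ℂ) (hω : ‖ω‖ = 1) (w : ℂ × ℂ) (hw : w ∈ G2) :
    ‖2*ω*w.2 - w.1‖ < ‖2 - ω*w.1‖ := by
  obtain ⟨z₁, z₂, h₁, h₂, rfl⟩ := hw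
  have hc : (starRingEnd ℂ) ω * ω = 1 := by
    rw [mul_comm, Complex.mul_conj, Complex.normSq_eq_norm_sq, hω]; norm_num
  have e1 : 2*ω*(z₁*z₂) - (z₁+z₂)
      = (starRingEnd ℂ) ω * (2*(ω*z₁)*(ω*z₂) - ω*z₁ - ω*z₂) := by
    linear_combination (z₁ + z₂ - 2*ω*z₁*z₂) * hc
  have e2 : (2:ℂ) - ω*(z₁+z₂) = 2 - ω*z₁ - ω*z₂ := by ring
  have ha : ‖ω*z₁‖ < 1 := by rw [norm_mul, hω, one_mul]; exact h₁
  have hb : ‖ω*z₂‖ < 1 := by rw [norm_mul, hω, one_mul]; exact h₂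
  calc ‖2*ω*(z₁+z₂, z₁*z₂).2 - (z₁+z₂, z₁*z₂).1‖
      = ‖2*(ω*z₁)*(ω*z₂) - ω*z₁ - ω*z₂‖ := by
        simp only []
        rw [e1, norm_mul, Complex.norm_conj, hω, one_mul]
    _ < ‖2 - ω*z₁ - ω*z₂‖ := magic_aux _ _ ha hb
    _ = ‖2 - ω*(z₁+z₂, z₁*z₂).1‖ := by rw [e2]

lemma julia (u : ℂ → ℂ) (hdisc : DifferentiableOn ℂ u (ball 0 1))
    (hmap : ∀ z ∈ ball (0:ℂ) 1, ‖u z‖ < 1)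
    (h0 : u 0 = 0) (h1 : u 1 = 1)
    (hext : ∀ᶠ w in nhds (1:ℂ), DifferentiableAt ℂ u w) :
    ∃ r : ℝ, 1 ≤ r ∧ deriv u 1 = (r : ℂ) := by
  have hmapsTo : MapsTo u (ball (0:ℂ) 1) (ball (0:ℂ) 1) := fun z hz =>
    mem_ball_zero_iff.2 (by simpa using hmap z hz)
  have hS : ∀ z : ℂ, ‖z‖ < 1 → ‖u z‖ ≤ ‖z‖ := fun z hz =>
    norm_le_norm_of_mapsTo_ball hdisc (hmapsTo.mono_right ball_subset_closedBall) h0 hz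
  have hd1 : DifferentiableAt ℂ u 1 := hext.self_of_nhds
  set c : ℂ := deriv u 1 with hc
  have hder : HasDerivAt u c 1 := hd1.hasDerivAt
  -- boundary bound near 1
  have hb : ∀ z : ℂ, ‖z‖ = 1 → DifferentiableAt ℂ u z → ‖u z‖ ≤ 1 := by
    intro z hz hdz
    have hcont : ContinuousAt u z := hdz.continuousAt
    have hmulc : Continuous (fun t : ℝ => (t : ℂ) * z) :=
      Complex.continuous_ofReal.mul continuous_const
    have htz : Filter.Tendsto (fun t : ℝ => (t : ℂ) * z) (nhdsWithin 1 (Set.Iio 1)) (nhds z) := by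
      have h' := hmulc.tendsto (1:ℝ)
      simp only [Complex.ofReal_one, one_mul] at h'
      exact h'.mono_left nhdsWithin_le_nhds
    have htend : Filter.Tendsto (fun t : ℝ => u ((t : ℂ) * z)) (nhdsWithin 1 (Set.Iio 1))
        (nhds (u z)) := hcont.tendsto.comp htz
    have htabs : Filter.Tendsto (fun t : ℝ => ‖u ((t : ℂ) * z)‖)
        (nhdsWithin 1 (Set.Iio 1)) (nhds (‖u z‖)) :=
      (continuous_norm.tendsto _).comp htend
    refine le_of_tendsto htabs ?_
    filter_upwards [Ioo_mem_nhdsLT_of_mem (by norm_num : (1:ℝ) ∈ Set.Ioc 0 1)] with t ht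
    have habs : ‖(t : ℂ) * z‖ < 1 := by
      rw [norm_mul, hz, mul_one, Complex.norm_real, Real.norm_eq_abs, abs_of_pos ht.1]
      exact ht.2
    calc ‖u ((t : ℂ) * z)‖ ≤ ‖(t : ℂ) * z‖ := hS _ habs
      _ ≤ 1 := habs.le
  -- imaginary part of c vanishes
  have him : c.im = 0 := by
    have hloc : ∀ᶠ θ : ℝ in nhds 0, DifferentiableAt ℂ u (Complex.exp ((θ:ℂ) * I)) := by
      have hten : Filter.Tendsto (fun θ : ℝ => Complex.exp ((θ:ℂ) * I)) (nhds 0) (nhds 1) := by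
        have hctn : Continuous (fun θ : ℝ => Complex.exp ((θ:ℂ) * I)) :=
          Complex.continuous_exp.comp (Complex.continuous_ofReal.mul continuous_const)
        have h' := hctn.tendsto (0:ℝ)
        simpa using h'
      exact hten.eventually hext
    have hmax : IsLocalMax (fun θ : ℝ => (u (Complex.exp ((θ:ℂ) * I))).re) 0 := by
      refine hloc.mono fun θ hθ => ?_
      have hble := hb _ (Complex.norm_exp_ofReal_mul_I θ) hθ
      show (u (Complex.exp ((θ:ℂ) * I))).re ≤ (u (Complex.exp (((0:ℝ):ℂ) * I))).re
      have h00 : (u (Complex.exp (((0:ℝ):ℂ) * I))).re = 1 := by simp [h1]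
      rw [h00]
      exact (Complex.re_le_norm _).trans hble
    have hdv : HasDerivAt (fun θ : ℝ => (u (Complex.exp ((θ:ℂ) * I))).re) ((c * I).re) 0 := by
      have h₁ : HasDerivAt (fun θ : ℝ => (θ:ℂ) * I) I 0 := by
        simpa using (Complex.ofRealCLM.hasDerivAt (x := (0:ℝ))).mul_const I
      have h₂ : HasDerivAt (fun θ : ℝ => Complex.exp ((θ:ℂ) * I)) I 0 := by
        simpa using h₁.cexp
      have h₃ : HasDerivAt (fun θ : ℝ => u (Complex.exp ((θ:ℂ) * I))) (c * I) 0 := by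
        have hu' : HasDerivAt u c (Complex.exp ((0:ℝ) * I)) := by simpa using hder
        have := HasDerivAt.scomp (0:ℝ) hu' h₂
        simpa [smul_eq_mul, mul_comm, Function.comp_def] using this
      exact Complex.reCLM.hasFDerivAt.comp_hasDerivAt 0 h₃
    have hz := hmax.hasDerivAt_eq_zero hdv
    simpa [Complex.mul_re, Complex.I_re, Complex.I_im] using hz
  -- real part at least 1
  have hre : 1 ≤ c.re := by
    have hslope : Filter.Tendsto (slope u 1) (nhdsWithin 1 {(1:ℂ)}ᶜ) (nhds c) :=
      hasDerivAt_iff_tendsto_slope.mp hder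
    have hcoe : Filter.Tendsto (fun t : ℝ => (t:ℂ)) (nhdsWithin 1 (Set.Iio 1))
        (nhdsWithin 1 {(1:ℂ)}ᶜ) := by
      apply tendsto_nhdsWithin_of_tendsto_nhds_of_eventually_within
      · exact (Complex.continuous_ofReal.tendsto 1).mono_left nhdsWithin_le_nhds
      · filter_upwards [self_mem_nhdsWithin] with t ht
        exact fun hteq => absurd (by exact_mod_cast Set.mem_singleton_iff.mp hteq : t = 1) (ne_of_lt ht)
    have hcomp : Filter.Tendsto (fun t : ℝ => ((slope u 1 (t:ℂ)).re))
        (nhdsWithin 1 (Set.Iio 1)) (nhds c.re) :=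
      (Complex.continuous_re.tendsto c).comp (hslope.comp hcoe)
    refine ge_of_tendsto hcomp ?_
    filter_upwards [Ioo_mem_nhdsLT_of_mem (by norm_num : (1:ℝ) ∈ Set.Ioc 0 1)] with t ht
    have h1t : (0:ℝ) < 1 - t := by linarith [ht.2]
    have htball : ‖(t:ℂ)‖ < 1 := by
      rw [Complex.norm_real, Real.norm_eq_abs, abs_of_pos ht.1]; exact ht.2
    have habs : ‖u t‖ ≤ t := by
      have := hS t htball
      rwa [Complex.norm_real, Real.norm_eq_abs, abs_of_pos ht.1] at this
    have hse : slope u 1 ((t:ℂ)) = (((1 - t)⁻¹ : ℝ) : ℂ) * (1 - u t) := by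
      have hne2 : ((1 - t : ℝ) : ℂ) ≠ 0 := Complex.ofReal_ne_zero.2 h1t.ne'
      have hne3 : (1:ℂ) - (t:ℂ) ≠ 0 := by
        rw [show (1:ℂ) - (t:ℂ) = ((1 - t : ℝ):ℂ) from by push_cast; ring]
        exact hne2
      have hne4 : (t:ℂ) - 1 ≠ 0 := fun hh => hne3 (by linear_combination -hh)
      rw [slope_def_field, h1, Complex.ofReal_inv]
      field_simp
      push_cast; ring
    rw [hse, Complex.re_ofReal_mul]
    have hre1 : 1 - t ≤ (1 - u t).re := by
      have : (u t).re ≤ ‖u t‖ := Complex.re_le_norm _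
      simp only [Complex.sub_re, Complex.one_re]
      linarith
    calc (1:ℝ) = (1 - t)⁻¹ * (1 - t) := (inv_mul_cancel₀ h1t.ne').symm
      _ ≤ (1 - t)⁻¹ * (1 - u t).re := by
          apply mul_le_mul_of_nonneg_left hre1 (by positivity)
  exact ⟨c.re, hre, by
    rw [hc] at him hre ⊢
    exact Complex.ext (by simp) (by simp [him])⟩

theorem stmt_16 (α : ℂ) (hα : ‖α‖ = 1)
    (f : ℂ × ℂ → ℂ × ℂ)
    (hd : DifferentiableOn ℂ f G2) (hmaps : Set.MapsTo f G2 G2)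
    (h0 : f (0, 0) = (0, 0))
    (z₀ : ℂ × ℂ) (hz₀ : z₀ = (2 * α, α ^ 2))
    (hext : ∀ᶠ w in nhds z₀, DifferentiableAt ℂ f w)
    (hfix : f z₀ = z₀) :
    ∃ lam : ℝ,
      (lam : ℂ) = fderiv ℂ (fun w => (f w).1) z₀ (1, 0)
          + α * fderiv ℂ (fun w => (f w).1) z₀ (0, 1) ∧
      (lam : ℂ) = conj α * fderiv ℂ (fun w => (f w).2) z₀ (1, 0)
          + fderiv ℂ (fun w => (f w).2) z₀ (0, 1) ∧
      1 ≤ lam ∧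
      fderiv ℂ f z₀ (1, α) = (lam : ℂ) • ((1 : ℂ), α) := by
  subst hz₀
  have hdz : DifferentiableAt ℂ f (2*α, α^2) := hext.self_of_nhds
  set F' := fderiv ℂ f (2*α, α^2) with hF'def
  have hF : HasFDerivAt f F' (2*α, α^2) := hdz.hasFDerivAt
  set k := (starRingEnd ℂ) α with hkdef
  have hαα : k * α = 1 := by
    rw [hkdef, mul_comm, Complex.mul_conj, Complex.normSq_eq_norm_sq, hα]; norm_num
  set A := (F' (1, α)).1 with hAdef
  set B := (F' (1, α)).2 with hBdef
  set C := k * B with hCdef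
  clear_value F' k A B C
  -- the royal curve
  have hmem : ∀ z : ℂ, ‖z‖ < 1 → ((2*α*z, α^2*z^2) : ℂ × ℂ) ∈ G2 := by
    intro z hz
    refine ⟨α*z, α*z, ?_, ?_, ?_⟩
    · rw [norm_mul, hα, one_mul]; exact hz
    · rw [norm_mul, hα, one_mul]; exact hz
    · rw [Prod.mk.injEq]; constructor <;> ring
  have hhdiff : Differentiable ℂ (fun z : ℂ => ((2*α*z, α^2*z^2) : ℂ × ℂ)) := by
    apply Differentiable.prodMk
    · exact (differentiable_id.const_mul _)
    · exact (differentiable_pow 2).const_mul _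
  have hFdOn : DifferentiableOn ℂ (fun z : ℂ => f (2*α*z, α^2*z^2)) (ball 0 1) := by
    intro z hz
    exact (hd _ (hmem z (mem_ball_zero_iff.1 hz))).comp z
      (hhdiff z).differentiableWithinAt
      (fun w hw => hmem w (mem_ball_zero_iff.1 hw))
  have hval1 : f (2*α*1, α^2*1^2) = ((2*α, α^2) : ℂ × ℂ) := by
    rw [show ((2*α*1, α^2*1^2) : ℂ × ℂ) = ((2*α, α^2) : ℂ × ℂ) by norm_num]
    exact hfix
  have hval0 : f (2*α*0, α^2*0^2) = ((0, 0) : ℂ × ℂ) := by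
    rw [show ((2*α*0, α^2*0^2) : ℂ × ℂ) = ((0, 0) : ℂ × ℂ) by norm_num]
    exact h0
  -- derivative of the composed curve at 1
  have hcurve : HasDerivAt (fun z : ℂ => ((2*α*z, α^2*z^2) : ℂ × ℂ)) ((2*α, 2*α^2)) 1 := by
    have h1 : HasDerivAt (fun z : ℂ => 2*α*z) (2*α) 1 := by
      simpa using (hasDerivAt_id (1:ℂ)).const_mul (2*α)
    have h2 : HasDerivAt (fun z : ℂ => α^2*z^2) (2*α^2) 1 := by
      have := (hasDerivAt_pow 2 (1:ℂ)).const_mul (α^2)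
      simpa [mul_comm] using this
    exact h1.prodMk h2
  have hFc : HasDerivAt (fun z : ℂ => f (2*α*z, α^2*z^2)) (F' (2*α, 2*α^2)) 1 := by
    have h := hF.comp_hasDerivAt_of_eq 1 hcurve (by norm_num)
    simpa [Function.comp_def] using h
  have hlinval : F' (2*α, 2*α^2) = (2*α*A, 2*α*B) := by
    have hsm : ((2*α, 2*α^2) : ℂ × ℂ) = (2*α) • ((1 : ℂ), α) := by
      rw [Prod.smul_mk, Prod.mk.injEq, smul_eq_mul, smul_eq_mul]
      constructor <;> ring
    rw [hsm, map_smul, hAdef, hBdef, Prod.smul_def, smul_eq_mul, smul_eq_mul]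
  have hS1 : HasDerivAt (fun z : ℂ => (f (2*α*z, α^2*z^2)).1) (2*α*A) 1 := by
    have h := (ContinuousLinearMap.fst ℂ ℂ ℂ).hasFDerivAt.comp_hasDerivAt 1 hFc
    simpa [hlinval, Function.comp_def] using h
  have hS2 : HasDerivAt (fun z : ℂ => (f (2*α*z, α^2*z^2)).2) (2*α*B) 1 := by
    have h := (ContinuousLinearMap.snd ℂ ℂ ℂ).hasFDerivAt.comp_hasDerivAt 1 hFc
    simpa [hlinval, Function.comp_def] using h
  -- the key inequality family
  have key : ∀ s : ℝ, ∃ r : ℝ, 1 ≤ r ∧ (r : ℂ) = C + I*(s:ℂ)*(A - C) := by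
    intro s
    have hden0 : (I*(s:ℂ) + 1) ≠ 0 := by
      intro hh
      have := congrArg Complex.re hh
      simp [Complex.add_re, Complex.mul_re] at this
    set x := (I*(s:ℂ) - 1)/(I*(s:ℂ) + 1) with hxdef
    have hxmul : x * (I*(s:ℂ) + 1) = I*(s:ℂ) - 1 := div_mul_cancel₀ _ hden0
    have hxabs : ‖x‖ = 1 := by
      rw [hxdef, norm_div]
      have hnum : Complex.normSq (I*(s:ℂ) - 1) = Complex.normSq (I*(s:ℂ) + 1) := by
        simp [Complex.normSq_apply, Complex.add_re, Complex.add_im, Complex.sub_re,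
          Complex.sub_im, Complex.mul_re, Complex.mul_im]
      rw [Complex.norm_def, Complex.norm_def, hnum]
      exact div_self (Real.sqrt_ne_zero'.2 (Complex.normSq_pos.2 hden0))
    have hx1 : x ≠ 1 := by
      intro hh
      rw [hh, one_mul] at hxmul
      have : (2:ℂ) = 0 := by linear_combination hxmul
      exact two_ne_zero this
    clear_value x
    set ω := k * x with hωdef
    have hω : ‖ω‖ = 1 := by
      rw [hωdef, norm_mul, hkdef, Complex.norm_conj, hα, hxabs, one_mul]
    have hωα : ω * α = x := by
      rw [hωdef]
      linear_combination x * hαα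
    clear_value ω
    have hD1ne : (2:ℂ) - ω*(2*α) ≠ 0 := by
      intro hh
      apply hx1
      linear_combination (-(1:ℂ)/2)*hh - hωα
    -- the one-variable function
    set g := fun z : ℂ => -k * (2*ω*(f (2*α*z, α^2*z^2)).2 - (f (2*α*z, α^2*z^2)).1)
        / (2 - ω*(f (2*α*z, α^2*z^2)).1) with hgdef
    have hdenball : ∀ z : ℂ, ‖z‖ < 1 → (2:ℂ) - ω*(f (2*α*z, α^2*z^2)).1 ≠ 0 := by
      intro z hz hh
      have hG : f (2*α*z, α^2*z^2) ∈ G2 := hmaps (hmem z hz)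
      have hlt := magic ω hω _ hG
      rw [hh, norm_zero] at hlt
      exact (norm_nonneg _).not_gt hlt
    have hgOn : DifferentiableOn ℂ g (ball 0 1) := by
      intro z hz
      have hFz := hFdOn z hz
      exact (((hFz.snd.const_mul (2*ω)).sub hFz.fst).const_mul (-k)).div
        ((hFz.fst.const_mul ω).const_sub 2) (hdenball z (mem_ball_zero_iff.1 hz))
    have hgmap : ∀ z ∈ ball (0:ℂ) 1, ‖g z‖ < 1 := by
      intro z hz
      have hz' := mem_ball_zero_iff.1 hz
      have hG : f (2*α*z, α^2*z^2) ∈ G2 := hmaps (hmem z hz')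
      have hlt := magic ω hω _ hG
      have hpos : 0 < ‖2 - ω*(f (2*α*z, α^2*z^2)).1‖ :=
        (norm_nonneg _).trans_lt hlt
      show ‖-k * (2*ω*(f (2*α*z, α^2*z^2)).2 - (f (2*α*z, α^2*z^2)).1)
        / (2 - ω*(f (2*α*z, α^2*z^2)).1)‖ < 1
      rw [norm_div, norm_mul, hkdef, norm_neg, Complex.norm_conj, hα, one_mul]
      rw [div_lt_one hpos]
      exact hlt
    have hg0 : g 0 = 0 := by
      rw [hgdef]
      simp only [hval0]
      norm_num
    have hg1 : g 1 = 1 := by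
      rw [hgdef]
      simp only [hval1]
      rw [div_eq_one_iff_eq (by simpa using hD1ne)]
      show -k * (2*ω*α^2 - 2*α) = 2 - ω*(2*α)
      linear_combination (2 - 2*ω*α) * hαα
    have hgext : ∀ᶠ w in nhds (1:ℂ), DifferentiableAt ℂ g w := by
      have hten : Filter.Tendsto (fun z : ℂ => ((2*α*z, α^2*z^2) : ℂ × ℂ)) (nhds 1)
          (nhds (2*α, α^2)) := by
        have := hhdiff.continuous.tendsto 1
        simpa using this
      have hFev : ∀ᶠ w in nhds (1:ℂ), DifferentiableAt ℂ (fun z => f (2*α*z, α^2*z^2)) w := by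
        filter_upwards [hten.eventually hext] with w hw
        exact hw.comp w (hhdiff w)
      have hcont1 : ContinuousAt (fun z : ℂ => (2:ℂ) - ω*(f (2*α*z, α^2*z^2)).1) 1 := by
        have hd1 : DifferentiableAt ℂ (fun z => f (2*α*z, α^2*z^2)) 1 := hFev.self_of_nhds
        exact (continuousAt_const.sub (continuousAt_const.mul (hd1.continuousAt.fst)))
      have hvne : (2:ℂ) - ω*(f (2*α*1, α^2*1^2)).1 ≠ 0 := by
        rw [hval1]
        simpa using hD1ne
      have hne : ∀ᶠ w in nhds (1:ℂ), (2:ℂ) - ω*(f (2*α*w, α^2*w^2)).1 ≠ 0 :=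
        hcont1.eventually_ne hvne
      filter_upwards [hFev, hne] with w hw hwne
      exact (((hw.snd.const_mul (2*ω)).sub hw.fst).const_mul (-k)).div
        ((hw.fst.const_mul ω).const_sub 2) hwne
    obtain ⟨r, hr1, hrd⟩ := julia g hgOn hgmap hg0 hg1 hgext
    refine ⟨r, hr1, ?_⟩
    -- compute deriv g 1
    have hN : HasDerivAt (fun z : ℂ => -k * (2*ω*(f (2*α*z, α^2*z^2)).2
        - (f (2*α*z, α^2*z^2)).1)) (-k * (2*ω*(2*α*B) - 2*α*A)) 1 :=
      ((hS2.const_mul (2*ω)).sub hS1).const_mul (-k)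
    have hD : HasDerivAt (fun z : ℂ => (2:ℂ) - ω*(f (2*α*z, α^2*z^2)).1)
        (-(ω*(2*α*A))) 1 := (hS1.const_mul ω).const_sub 2
    have hdiv := hN.div hD (by rw [hval1]; simpa using hD1ne)
    have hgd : deriv g 1 = (-k * (2*ω*(2*α*B) - 2*α*A) * (2 - ω*(2*α))
        - -k * (2*ω*α^2 - 2*α) * -(ω*(2*α*A))) / (2 - ω*(2*α))^2 := by
      have := hdiv.deriv
      rw [hgdef]
      rw [show (fun z : ℂ => -k * (2*ω*(f (2*α*z, α^2*z^2)).2 - (f (2*α*z, α^2*z^2)).1)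
        / (2 - ω*(f (2*α*z, α^2*z^2)).1)) = (fun y : ℂ => (-k * (2*ω*(f (2*α*y, α^2*y^2)).2
        - (f (2*α*y, α^2*y^2)).1)) / ((2:ℂ) - ω*(f (2*α*y, α^2*y^2)).1)) from rfl]
      rw [hval1] at this; exact this
    rw [hrd] at hgd
    -- simplify using the relations
    have hn1 : -k * (2*ω*α^2 - 2*α) = 2 - 2*x := by
      linear_combination (2 - 2*ω*α)*hαα - 2*hωα
    have hd1 : (2:ℂ) - ω*(2*α) = 2 - 2*x := by
      linear_combination -2*hωα
    have hn' : -k * (2*ω*(2*α*B) - 2*α*A) = 2*A - 4*x*C := by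
      rw [hCdef, hωdef]
      linear_combination (2*A - 4*k*x*B)*hαα
    have hd' : -(ω*(2*α*A)) = -(2*x*A) := by
      linear_combination -2*A*hωα
    rw [hn1, hd1, hn', hd'] at hgd
    have h2x : (2:ℂ) - 2*x ≠ 0 := by rw [← hd1]; exact hD1ne
    rw [hgd]
    rw [div_eq_iff (pow_ne_zero 2 h2x)]
    linear_combination (2*((A:ℂ) - C))*(2 - 2*x)*hxmul
  -- extract the eigenvalue
  obtain ⟨r0, hr0, he0⟩ := key 0
  obtain ⟨r1, _, he1⟩ := key 1
  have hCr : C = (r0:ℂ) := by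
    rw [he0]; push_cast; ring
  have hT : I*(A - C) = ((r1 - r0 : ℝ):ℂ) := by
    push_cast at he1 ⊢
    rw [← hCr]
    linear_combination -he1
  have htzero : r1 - r0 = 0 := by
    by_contra hne
    obtain ⟨r, hrge, hre⟩ := key (-r0/(r1 - r0))
    have hcne : ((r1:ℂ) - r0) ≠ 0 := by
      rw [show ((r1:ℂ) - r0) = (((r1 - r0 : ℝ)):ℂ) from by push_cast; ring]
      exact Complex.ofReal_ne_zero.2 hne
    have hrz : (r:ℂ) = 0 := by
      rw [hre]
      rw [show I*((-r0/(r1 - r0) : ℝ):ℂ)*(A - C) = ((-r0/(r1 - r0) : ℝ):ℂ)*(I*(A - C)) from by ring]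
      rw [hT, hCr]
      push_cast
      field_simp
      ring
    have : r = 0 := by exact_mod_cast hrz
    linarith
  have hAC : A = C := by
    have hz' : I*(A - C) = 0 := by rw [hT, htzero]; simp
    have := mul_eq_zero.1 hz'
    rcases this with h | h
    · exact absurd h I_ne_zero
    · exact sub_eq_zero.1 h
  have hfst : fderiv ℂ (fun w => (f w).1) ((2*α, α^2) : ℂ × ℂ)
      = (ContinuousLinearMap.fst ℂ ℂ ℂ).comp F' := (hF.fst).fderiv
  have hsnd : fderiv ℂ (fun w => (f w).2) ((2*α, α^2) : ℂ × ℂ)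
      = (ContinuousLinearMap.snd ℂ ℂ ℂ).comp F' := (hF.snd).fderiv
  have hsplitv : ((1:ℂ), α) = ((1:ℂ), 0) + α • ((0:ℂ), 1) := by
    rw [Prod.smul_mk, Prod.mk.injEq]
    constructor <;> simp
  have hsplit1 : A = (F' (1, 0)).1 + α * (F' (0, 1)).1 := by
    rw [hAdef, hsplitv, map_add, map_smul]
    simp [smul_eq_mul]
  have hsplit2 : B = (F' (1, 0)).2 + α * (F' (0, 1)).2 := by
    rw [hBdef, hsplitv, map_add, map_smul]
    simp [smul_eq_mul]
  refine ⟨r0, ?_, ?_, hr0, ?_⟩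
  · rw [show ((2 * α, α ^ 2) : ℂ × ℂ) = ((2*α, α^2) : ℂ × ℂ) from rfl, hfst]
    simp only [ContinuousLinearMap.coe_comp', Function.comp_apply,
      ContinuousLinearMap.coe_fst']
    linear_combination hsplit1 - hAC - hCr
  · rw [show ((2 * α, α ^ 2) : ℂ × ℂ) = ((2*α, α^2) : ℂ × ℂ) from rfl, hsnd]
    simp only [ContinuousLinearMap.coe_comp', Function.comp_apply,
      ContinuousLinearMap.coe_snd']
    linear_combination -hCr + hCdef + k*hsplit2 + (F' (0, 1)).2 * hαα
  · rw [show F' (1, α) = (A, B) from by rw [hAdef, hBdef]]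
    have h1 : A = (r0:ℂ) * 1 := by rw [mul_one]; linear_combination hAC + hCr
    have h2 : B = (r0:ℂ) * α := by linear_combination α*hCr - α*hCdef - B*hαα
    rw [Prod.smul_mk, smul_eq_mul, smul_eq_mul, Prod.mk.injEq]
    exact ⟨h1, h2⟩
end

section
/- Let h : G₂ → D be holomorphic with h(0,0) = 0, let θ ∈ [0,2π), and z₀ = (0, e^{iθ}) ∈ ∂G₂. If h extends holomorphically to a neighborhood of z₀ and h(z₀) = ω e^{iθ} for some ω with |ω| = 1, then ω̄·∂h/∂p(z₀) is real with ω̄·∂h/∂p(z₀) ≥ 1, and |∂h/∂s(z₀)| ≤ ω̄·∂h/∂p(z₀). -/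
open Complex ComplexConjugate

section Aux

open Filter Metric Set Real

lemma aux_radial (F : ℂ → ℂ) (d : ℂ) (hF : HasDerivAt F d 1) (c : ℂ) (hc : c ≠ 0) :
    Tendsto (fun t : ℝ => (F 1 - F (1 - t * c)) / t) (nhdsWithin 0 (Set.Ioi 0))
      (nhds (d * c)) := by
  have hslope := hasDerivAt_iff_tendsto_slope.mp hF
  have hι : Tendsto (fun t : ℝ => 1 - (t : ℂ) * c) (nhdsWithin 0 (Set.Ioi 0))
      (nhdsWithin 1 {(1 : ℂ)}ᶜ) := by
    apply tendsto_nhdsWithin_of_tendsto_nhds_of_eventually_within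
    · have hcont : Continuous fun t : ℝ => 1 - (t : ℂ) * c := by continuity
      have := hcont.tendsto 0
      simp only [Complex.ofReal_zero, zero_mul, sub_zero] at this
      exact this.mono_left nhdsWithin_le_nhds
    · filter_upwards [self_mem_nhdsWithin] with t ht
      simp only [Set.mem_Ioi] at ht
      simp only [Set.mem_compl_iff, Set.mem_singleton_iff]
      intro H
      have : (t : ℂ) * c = 0 := by linear_combination -H
      rcases mul_eq_zero.mp this with h1 | h1
      · exact ht.ne' (by exact_mod_cast h1)
      · exact hc h1
  have hcomp := (hslope.comp hι).mul_const c
  refine hcomp.congr' ?_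
  filter_upwards [self_mem_nhdsWithin] with t ht
  simp only [Set.mem_Ioi] at ht
  have ht' : (t : ℂ) ≠ 0 := by exact_mod_cast ht.ne'
  show slope F 1 (1 - t * c) * c = (F 1 - F (1 - t * c)) / t
  rw [slope_def_field]
  field_simp
  ring


lemma aux_key (F : ℂ → ℂ) (d : ℂ) (hF : HasDerivAt F d 1) (h1 : F 1 = 1)
    (hb : ∀ z ∈ Metric.ball (0 : ℂ) 1, ‖F z‖ ≤ 1)
    (φ : ℝ) (hφ : 0 < Real.cos φ) : 0 ≤ (d * Complex.exp (φ * I)).re := by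
  set c := Complex.exp ((φ : ℂ) * I) with hc_def
  have lim := aux_radial F d hF c (Complex.exp_ne_zero _)
  have limre : Tendsto (fun t : ℝ => ((F 1 - F (1 - t * c)) / t).re)
      (nhdsWithin 0 (Set.Ioi 0)) (nhds ((d * c).re)) :=
    (Complex.continuous_re.tendsto _).comp lim
  refine ge_of_tendsto limre ?_
  filter_upwards [Ioo_mem_nhdsGT_of_mem (Set.mem_Ico.mpr ⟨le_refl (0:ℝ), hφ⟩)] with t ht
  obtain ⟨ht0, htc⟩ := ht
  have hcos1 := Real.cos_le_one φ
  have hmem : (1 - (t : ℂ) * c) ∈ Metric.ball (0 : ℂ) 1 := by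
    rw [Metric.mem_ball, dist_zero_right]
    have hsq : ‖1 - (t : ℂ) * c‖ ^ 2 < 1 := by
      rw [Complex.sq_norm, Complex.normSq_apply]
      simp only [Complex.sub_re, Complex.sub_im, Complex.one_re, Complex.one_im,
        Complex.mul_re, Complex.mul_im, Complex.ofReal_re, Complex.ofReal_im, hc_def,
        Complex.exp_ofReal_mul_I_re, Complex.exp_ofReal_mul_I_im]
      nlinarith [Real.sin_sq_add_cos_sq φ, mul_lt_mul_of_pos_left htc ht0, mul_pos ht0 hφ]
    nlinarith [norm_nonneg (1 - (t : ℂ) * c)]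
  have hFz := hb _ hmem
  rw [h1]
  have hre : ((1 - F (1 - (t:ℂ) * c)) / (t : ℂ)).re = (1 - (F (1 - (t:ℂ) * c)).re) / t := by
    rw [Complex.div_ofReal_re]
    simp
  rw [hre]
  apply div_nonneg _ ht0.le
  linarith [Complex.re_le_norm (F (1 - (t:ℂ) * c))]

lemma aux_real_s17 (F : ℂ → ℂ) (d : ℂ) (hF : HasDerivAt F d 1) (h1 : F 1 = 1)
    (hb : ∀ z ∈ Metric.ball (0 : ℂ) 1, ‖F z‖ ≤ 1) :
    d.im = 0 ∧ 0 ≤ d.re := by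
  have key := aux_key F d hF h1 hb
  have hπ := Real.pi_pos
  have hre : 0 ≤ d.re := by
    have := key 0 (by simp)
    simpa using this
  have hcont : Continuous fun φ : ℝ => (d * Complex.exp ((φ : ℂ) * I)).re := by
    apply Complex.continuous_re.comp
    exact continuous_const.mul (Complex.continuous_exp.comp (by continuity))
  have hexp : ∀ x : ℝ, Complex.exp ((x : ℂ) * I) = Real.cos x + Real.sin x * I := by
    intro x
    rw [Complex.exp_mul_I, ← Complex.ofReal_cos, ← Complex.ofReal_sin]
  have him1 : 0 ≤ -d.im := by
    have htend : Tendsto (fun φ : ℝ => (d * Complex.exp ((φ : ℂ) * I)).re)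
        (nhdsWithin (Real.pi/2) (Set.Iio (Real.pi/2)))
        (nhds ((d * Complex.exp ((↑(Real.pi/2) : ℂ) * I)).re)) :=
      (hcont.tendsto _).mono_left nhdsWithin_le_nhds
    have hval : (d * Complex.exp ((↑(Real.pi/2) : ℂ) * I)).re = -d.im := by
      rw [hexp, Real.cos_pi_div_two, Real.sin_pi_div_two]
      simp [Complex.mul_re]
    rw [hval] at htend
    refine ge_of_tendsto htend ?_
    filter_upwards [Ioo_mem_nhdsLT_of_mem
      (show Real.pi/2 ∈ Set.Ioc (-(Real.pi/2)) (Real.pi/2) from ⟨by linarith, le_refl _⟩)] with φ hφ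
    exact key φ (Real.cos_pos_of_mem_Ioo hφ)
  have him2 : 0 ≤ d.im := by
    have htend : Tendsto (fun φ : ℝ => (d * Complex.exp ((φ : ℂ) * I)).re)
        (nhdsWithin (-(Real.pi/2)) (Set.Ioi (-(Real.pi/2))))
        (nhds ((d * Complex.exp ((↑(-(Real.pi/2)) : ℂ) * I)).re)) :=
      (hcont.tendsto _).mono_left nhdsWithin_le_nhds
    have hval : (d * Complex.exp ((↑(-(Real.pi/2)) : ℂ) * I)).re = d.im := by
      rw [hexp, Real.cos_neg, Real.sin_neg, Real.cos_pi_div_two, Real.sin_pi_div_two]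
      simp [Complex.mul_re]
    rw [hval] at htend
    refine ge_of_tendsto htend ?_
    filter_upwards [Ioo_mem_nhdsGT_of_mem
      (show -(Real.pi/2) ∈ Set.Ico (-(Real.pi/2)) (Real.pi/2) from ⟨le_refl _, by linarith⟩)] with φ hφ
    exact key φ (Real.cos_pos_of_mem_Ioo hφ)
  exact ⟨le_antisymm (by linarith) him2, hre⟩

lemma aux_one (F : ℂ → ℂ) (d : ℂ) (hF : HasDerivAt F d 1) (h1 : F 1 = 1)
    (hS : ∀ z ∈ Metric.ball (0 : ℂ) 1, ‖F z‖ ≤ ‖z‖) :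
    1 ≤ d.re := by
  have lim := aux_radial F d hF 1 one_ne_zero
  have limre : Tendsto (fun t : ℝ => ((F 1 - F (1 - t * 1)) / t).re)
      (nhdsWithin 0 (Set.Ioi 0)) (nhds ((d * 1).re)) :=
    (Complex.continuous_re.tendsto _).comp lim
  rw [mul_one] at limre
  refine ge_of_tendsto limre ?_
  filter_upwards [Ioo_mem_nhdsGT_of_mem (Set.mem_Ico.mpr ⟨le_refl (0:ℝ), one_pos⟩)] with t ht
  obtain ⟨ht0, ht1⟩ := ht
  have hzeq : (1 - (t : ℂ) * 1) = ((1 - t : ℝ) : ℂ) := by push_cast; ring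
  have habsz : ‖1 - (t : ℂ) * 1‖ = 1 - t := by
    rw [hzeq, Complex.norm_real, Real.norm_eq_abs, abs_of_pos (by linarith)]
  have hmem : (1 - (t : ℂ) * 1) ∈ Metric.ball (0 : ℂ) 1 := by
    rw [Metric.mem_ball, dist_zero_right, habsz]; linarith
  have hFz := hS _ hmem
  rw [habsz] at hFz
  rw [h1]
  have hre : ((1 - F (1 - (t:ℂ) * 1)) / (t : ℂ)).re = (1 - (F (1 - (t:ℂ) * 1)).re) / t := by
    rw [Complex.div_ofReal_re]; simp
  rw [hre, le_div_iff₀ ht0]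
  linarith [Complex.re_le_norm (F (1 - (t:ℂ) * 1))]


lemma mem_G2_zero (c : ℂ) (hc : ‖c‖ < 1) : ((0 : ℂ), c) ∈ G2 := by
  obtain ⟨r, hr⟩ := IsAlgClosed.exists_pow_nat_eq (-c) (n := 2) zero_lt_two
  have habs : ‖r‖ < 1 := by
    have h2 : ‖r‖ ^ 2 < 1 := by
      rw [← norm_pow, hr, norm_neg]; exact hc
    nlinarith [norm_nonneg r]
  exact ⟨r, -r, habs, by rwa [norm_neg],
    Prod.ext_iff.mpr ⟨by ring, by linear_combination hr⟩⟩

lemma blaschke_pack (α : ℝ) (hα : 0 < α) :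
    ∃ φ : ℂ → ℂ, (∀ z : ℂ, ‖z‖ < 1 → ‖φ z‖ < 1) ∧ φ 1 = 1 ∧
      HasDerivAt φ (α : ℂ) 1 := by
  set a : ℝ := (1 - α)/(1 + α) with ha_def
  have h1α : (0:ℝ) < 1 + α := by linarith
  have ha1 : a < 1 := by rw [ha_def, div_lt_one h1α]; linarith
  have ha2 : -1 < a := by
    rw [ha_def, lt_div_iff₀ h1α]; nlinarith
  have hasq : a^2 < 1 := by nlinarith
  have hrel : α * (1 + a) = 1 - a := by
    rw [ha_def]; field_simp; ring
  have hrelC : (α : ℂ) * (1 + (a:ℂ)) = 1 - (a:ℂ) := by exact_mod_cast hrel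
  have hden : ∀ z : ℂ, ‖z‖ ≤ 1 → (1 + (a:ℂ) * z) ≠ 0 := by
    intro z hz H
    have h1 : (a:ℂ) * z = -1 := by linear_combination H
    have h2 : ‖(a:ℂ) * z‖ = 1 := by rw [h1]; simp
    rw [norm_mul, Complex.norm_real, Real.norm_eq_abs] at h2
    have : |a| < 1 := abs_lt.mpr ⟨ha2, ha1⟩
    nlinarith [norm_nonneg z, abs_nonneg a]
  refine ⟨fun z : ℂ => (z + a) / (1 + a * z), ?_, ?_, ?_⟩
  · intro z hz
    have hne := hden z hz.le
    have hpos : 0 < ‖1 + (a:ℂ) * z‖ := norm_pos_iff.mpr hne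
    rw [norm_div, div_lt_one hpos]
    refine lt_of_pow_lt_pow_left₀ 2 (norm_nonneg _) ?_
    rw [Complex.sq_norm, Complex.sq_norm, Complex.normSq_apply, Complex.normSq_apply]
    have hsq : Complex.normSq z < 1 := by
      rw [← Complex.sq_norm]; nlinarith [norm_nonneg z]
    rw [Complex.normSq_apply] at hsq
    simp only [Complex.add_re, Complex.add_im, Complex.one_re, Complex.one_im,
      Complex.mul_re, Complex.mul_im, Complex.ofReal_re, Complex.ofReal_im]
    nlinarith
  · have hne := hden 1 (by simp)
    rw [mul_one] at hne
    show ((1:ℂ) + (a:ℂ)) / (1 + (a:ℂ) * 1) = 1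
    rw [mul_one]
    exact div_self hne
  · have hnum : HasDerivAt (fun z : ℂ => z + (a:ℂ)) 1 1 := (hasDerivAt_id 1).add_const _
    have hd2 : HasDerivAt (fun z : ℂ => 1 + (a:ℂ) * z) ((a:ℂ) * 1) 1 :=
      ((hasDerivAt_id 1).const_mul (a:ℂ)).const_add 1
    have hne : (1:ℂ) + (a:ℂ) * 1 ≠ 0 := hden 1 (by simp)
    have := hnum.div hd2 hne
    refine this.congr_deriv ?_; symm
    rw [mul_one] at hne
    field_simp
    linear_combination hrelC

end Aux

section Main

open Filter Metric Set Real

theorem stmt_17 (θ : ℝ) (hθ : θ ∈ Set.Ico 0 (2 * Real.pi))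
    (h : ℂ × ℂ → ℂ)
    (hd : DifferentiableOn ℂ h G2) (hmaps : Set.MapsTo h G2 (Metric.ball (0 : ℂ) 1))
    (h0 : h (0, 0) = 0)
    (z₀ : ℂ × ℂ) (hz₀ : z₀ = (0, Complex.exp (θ * Complex.I)))
    (hext : ∀ᶠ w in nhds z₀, DifferentiableAt ℂ h w)
    (ω : ℂ) (hω : ‖ω‖ = 1)
    (hval : h z₀ = ω * Complex.exp (θ * Complex.I)) :
    ∃ lam : ℝ,
      (lam : ℂ) = conj ω * fderiv ℂ h z₀ (0, 1) ∧ 1 ≤ lam ∧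
      ‖fderiv ℂ h z₀ (1, 0)‖ ≤ lam := by
  have hπ := Real.pi_pos
  set e : ℂ := Complex.exp (θ * Complex.I) with he_def
  have habs_e : ‖e‖ = 1 := Complex.norm_exp_ofReal_mul_I θ
  set ζ : ℂ := Complex.exp (((θ + Real.pi)/2 : ℝ) * Complex.I) with hζ_def
  have habs_ζ : ‖ζ‖ = 1 := Complex.norm_exp_ofReal_mul_I _
  have hζsq : ζ ^ 2 = -e := by
    rw [hζ_def, sq, ← Complex.exp_add, he_def]
    have harg : ((((θ + Real.pi)/2 : ℝ) : ℂ) * Complex.I) + ((((θ + Real.pi)/2 : ℝ) : ℂ) * Complex.I)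
        = (θ : ℂ) * Complex.I + (Real.pi : ℂ) * Complex.I := by push_cast; ring
    rw [harg, Complex.exp_add, Complex.exp_pi_mul_I]
    ring
  have hconj_e : conj e * e = 1 := by
    rw [mul_comm, Complex.mul_conj, Complex.normSq_eq_norm_sq, habs_e]
    norm_num
  have hconj_ω : conj ω * ω = 1 := by
    rw [mul_comm, Complex.mul_conj, Complex.normSq_eq_norm_sq, hω]
    norm_num
  have hdz₀ : DifferentiableAt ℂ h z₀ := hext.self_of_nhds
  set Df := fderiv ℂ h z₀ with hDf_def
  have hDf : HasFDerivAt h Df z₀ := hdz₀.hasFDerivAt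
  set S := Df (1, 0) with hS_def
  set P := Df (0, 1) with hP_def
  have hDfxy : ∀ x y : ℂ, Df (x, y) = x * S + y * P := by
    intro x y
    have hxy : (x, y) = x • ((1:ℂ), (0:ℂ)) + y • ((0:ℂ), (1:ℂ)) := by
      simp [Prod.ext_iff]
    rw [hxy, map_add, map_smul, map_smul, smul_eq_mul, smul_eq_mul]
  set v := conj ω * P with hv_def
  set u := conj (ω * e) * (ζ * S) with hu_def
  -- the G disc
  set G := fun z : ℂ => conj (ω * e) * h (0, e * z) with hG_def
  have hG1 : G 1 = 1 := by
    have : ((0:ℂ), e * 1) = z₀ := by rw [hz₀]; simp [he_def]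
    rw [hG_def]
    simp only [this, hval]
    rw [map_mul]
    calc conj ω * conj e * (ω * e) = (conj ω * ω) * (conj e * e) := by ring
    _ = 1 := by rw [hconj_ω, hconj_e, one_mul]
  have hGd : HasDerivAt G v 1 := by
    have hη : HasDerivAt (fun z : ℂ => ((0:ℂ), e * z)) ((0:ℂ), e) 1 := by
      apply HasDerivAt.prodMk
      · exact hasDerivAt_const _ _
      · simpa using (hasDerivAt_id (1:ℂ)).const_mul e
    have hz₀' : ((0:ℂ), e * 1) = z₀ := by rw [hz₀]; simp [he_def]
    have hcomp : HasDerivAt (fun z : ℂ => h (0, e * z)) (Df ((0:ℂ), e)) 1 := by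
      refine HasFDerivAt.comp_hasDerivAt 1 ?_ hη
      rw [hz₀']; exact hDf
    have := hcomp.const_mul (conj (ω * e))
    refine this.congr_deriv ?_; symm
    rw [hDfxy, hv_def, map_mul]
    calc conj ω * P = conj ω * P * (conj e * e) := by rw [hconj_e, mul_one]
    _ = conj ω * conj e * (0 * S + e * P) := by ring
  have hGmapsG2 : ∀ z : ℂ, ‖z‖ < 1 → ((0:ℂ), e * z) ∈ G2 := by
    intro z hz
    apply mem_G2_zero
    rw [norm_mul, habs_e, one_mul]; exact hz
  have hGball : Set.MapsTo G (Metric.ball (0:ℂ) 1) (Metric.ball (0:ℂ) 1) := by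
    intro z hz
    rw [Metric.mem_ball, dist_zero_right] at hz ⊢
    rw [hG_def]
    simp only [norm_mul, Complex.norm_conj, habs_e, hω, one_mul]
    have := hmaps (hGmapsG2 z hz)
    rwa [Metric.mem_ball, dist_zero_right] at this
  have hGdiff : DifferentiableOn ℂ G (Metric.ball (0:ℂ) 1) := by
    apply DifferentiableOn.const_mul
    apply hd.comp (f := fun z : ℂ => ((0:ℂ), e * z))
    · exact (differentiable_const _ |>.prodMk ((differentiable_id).const_mul e)).differentiableOn
    · intro z hz
      rw [Metric.mem_ball, dist_zero_right] at hz
      exact hGmapsG2 z hz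
  have hG0 : G 0 = 0 := by
    rw [hG_def]
    show conj (ω * e) * h (0, e * 0) = 0
    rw [mul_zero, h0, mul_zero]
  have hGschwarz : ∀ z ∈ Metric.ball (0:ℂ) 1, ‖G z‖ ≤ ‖z‖ := by
    intro z hz
    rw [Metric.mem_ball, dist_zero_right] at hz
    exact Complex.norm_le_norm_of_mapsTo_ball hGdiff (hGball.mono_right Metric.ball_subset_closedBall) hG0 hz
  have hvfacts := aux_real_s17 G v hGd hG1 (fun z hz => by
    have := hGball hz
    rw [Metric.mem_ball, dist_zero_right] at this
    exact this.le)
  obtain ⟨hvim, _⟩ := hvfacts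
  have hv1 : 1 ≤ v.re := aux_one G v hGd hG1 hGschwarz
  -- the two-parameter family of discs
  have key2 : ∀ α β : ℝ, 0 < α → 0 < β →
      (α - β) * u.im + (α + β) * v.im = 0 ∧ 0 ≤ (α - β) * u.re + (α + β) * v.re := by
    intro α β hα hβ
    obtain ⟨φ₁, hφ₁m, hφ₁1, hφ₁d⟩ := blaschke_pack α hα
    obtain ⟨φ₂, hφ₂m, hφ₂1, hφ₂d⟩ := blaschke_pack β hβ
    set D₂ := fun z : ℂ => (ζ * φ₁ z + -(ζ * φ₂ z), ζ * φ₁ z * -(ζ * φ₂ z)) with hD₂_def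
    have hD₂mem : ∀ z : ℂ, ‖z‖ < 1 → D₂ z ∈ G2 := by
      intro z hz
      exact ⟨ζ * φ₁ z, -(ζ * φ₂ z),
        by rw [norm_mul, habs_ζ, one_mul]; exact hφ₁m z hz,
        by rw [norm_neg, norm_mul, habs_ζ, one_mul]; exact hφ₂m z hz, rfl⟩
    have hD₂1 : D₂ 1 = z₀ := by
      rw [hD₂_def, hz₀]
      simp only [hφ₁1, hφ₂1, mul_one]
      rw [Prod.ext_iff]
      exact ⟨by ring, by linear_combination -hζsq⟩
    set F := fun z : ℂ => conj (ω * e) * h (D₂ z) with hF_def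
    have hF1 : F 1 = 1 := by
      rw [hF_def]
      simp only [hD₂1, hval, map_mul]
      calc conj ω * conj e * (ω * e) = (conj ω * ω) * (conj e * e) := by ring
      _ = 1 := by rw [hconj_ω, hconj_e, one_mul]
    have hFb : ∀ z ∈ Metric.ball (0:ℂ) 1, ‖F z‖ ≤ 1 := by
      intro z hz
      rw [Metric.mem_ball, dist_zero_right] at hz
      rw [hF_def]
      simp only [norm_mul, Complex.norm_conj, habs_e, hω, one_mul]
      have := hmaps (hD₂mem z hz)
      rw [Metric.mem_ball, dist_zero_right] at this
      exact this.le
    set d : ℂ := ((α : ℂ) - β) * u + ((α : ℂ) + β) * v with hd_def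
    have hFd : HasDerivAt F d 1 := by
      have h1d : HasDerivAt (fun z : ℂ => ζ * φ₁ z + -(ζ * φ₂ z))
          (ζ * (α:ℂ) + -(ζ * (β:ℂ))) 1 := ((hφ₁d.const_mul ζ).add ((hφ₂d.const_mul ζ).neg))
      have h2d : HasDerivAt (fun z : ℂ => ζ * φ₁ z * -(ζ * φ₂ z))
          (ζ * (α:ℂ) * -(ζ * φ₂ 1) + ζ * φ₁ 1 * -(ζ * (β:ℂ))) 1 :=
        (hφ₁d.const_mul ζ).mul ((hφ₂d.const_mul ζ).neg)
      have hDd : HasDerivAt D₂ (ζ * (α:ℂ) + -(ζ * (β:ℂ)),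
          ζ * (α:ℂ) * -(ζ * φ₂ 1) + ζ * φ₁ 1 * -(ζ * (β:ℂ))) 1 := h1d.prodMk h2d
      have hcomp : HasDerivAt (fun z : ℂ => h (D₂ z))
          (Df (ζ * (α:ℂ) + -(ζ * (β:ℂ)),
            ζ * (α:ℂ) * -(ζ * φ₂ 1) + ζ * φ₁ 1 * -(ζ * (β:ℂ)))) 1 := by
        refine HasFDerivAt.comp_hasDerivAt 1 ?_ hDd
        rw [hD₂1]; exact hDf
      have := hcomp.const_mul (conj (ω * e))
      refine this.congr_deriv ?_; symm
      rw [hDfxy, hd_def, hu_def, hv_def, hφ₁1, hφ₂1, map_mul]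
      have hζe : ζ * ζ = -e := by rw [← sq]; exact hζsq
      calc ((α : ℂ) - β) * (conj ω * conj e * (ζ * S)) + ((α : ℂ) + β) * (conj ω * P)
          = ((α : ℂ) - β) * (conj ω * conj e * (ζ * S))
            + ((α : ℂ) + β) * (conj ω * P) * (conj e * e) := by rw [hconj_e, mul_one]
        _ = conj ω * conj e *
            ((ζ * α + -(ζ * β)) * S + (ζ * α * -(ζ * 1) + ζ * 1 * -(ζ * β)) * P) := by
            rw [show ζ * α * -(ζ * 1) + ζ * 1 * -(ζ * β) = -(ζ * ζ) * ((α:ℂ) + β) by ring,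
              hζe]
            ring
    obtain ⟨him, hre⟩ := aux_real_s17 F d hFd hF1 hFb
    have hdim : d.im = (α - β) * u.im + (α + β) * v.im := by
      rw [hd_def]
      simp only [Complex.add_im, Complex.mul_im, Complex.sub_re, Complex.sub_im,
        Complex.add_re, Complex.ofReal_re, Complex.ofReal_im]
      ring
    have hdre2 : d.re = (α - β) * u.re + (α + β) * v.re := by
      rw [hd_def]
      simp only [Complex.add_re, Complex.mul_re, Complex.sub_re, Complex.sub_im,
        Complex.add_im, Complex.ofReal_re, Complex.ofReal_im]
      ring
    exact ⟨by rw [← hdim]; exact him, by rw [← hdre2]; exact hre⟩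
  -- extract inequalities
  have huim : u.im = 0 := by
    have h1 := (key2 1 (1/2) one_pos (by norm_num)).1
    rw [hvim] at h1
    linarith
  have hlin : ∀ α β : ℝ, 0 < α → 0 < β →
      0 ≤ α * (u.re + v.re) + β * (v.re - u.re) := by
    intro α β hα hβ
    have h1 := (key2 α β hα hβ).2
    have hid : α * (u.re + v.re) + β * (v.re - u.re)
        = (α - β) * u.re + (α + β) * v.re := by ring
    linarith [h1, hid]
  have hX : 0 ≤ u.re + v.re := by
    by_contra hneg
    push_neg at hneg
    set X := u.re + v.re with hXdef
    set Y := v.re - u.re with hYdef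
    have hden : (0:ℝ) < 2 * |Y| + 2 := by positivity
    have ht : 0 < -X / (2 * |Y| + 2) := div_pos (by linarith) hden
    have h2 := hlin 1 (-X / (2 * |Y| + 2)) one_pos ht
    have h3 : -X / (2 * |Y| + 2) * (2 * |Y| + 2) = -X := div_mul_cancel₀ _ hden.ne'
    have h4 : -X / (2 * |Y| + 2) * Y ≤ -X / (2 * |Y| + 2) * |Y| :=
      mul_le_mul_of_nonneg_left (le_abs_self Y) ht.le
    have h3' : 2 * (-X / (2 * |Y| + 2) * |Y|) + 2 * (-X / (2 * |Y| + 2)) = -X := by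
      linear_combination h3
    linarith [h2, h3', h4, ht, hneg]
  have hY : 0 ≤ v.re - u.re := by
    by_contra hneg
    push_neg at hneg
    set X := u.re + v.re with hXdef
    set Y := v.re - u.re with hYdef
    have hden : (0:ℝ) < 2 * |X| + 2 := by positivity
    have ht : 0 < -Y / (2 * |X| + 2) := div_pos (by linarith) hden
    have h2 := hlin (-Y / (2 * |X| + 2)) 1 ht one_pos
    have h3 : -Y / (2 * |X| + 2) * (2 * |X| + 2) = -Y := div_mul_cancel₀ _ hden.ne'
    have h4 : -Y / (2 * |X| + 2) * X ≤ -Y / (2 * |X| + 2) * |X| :=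
      mul_le_mul_of_nonneg_left (le_abs_self X) ht.le
    have h3' : 2 * (-Y / (2 * |X| + 2) * |X|) + 2 * (-Y / (2 * |X| + 2)) = -Y := by
      linear_combination h3
    linarith [h2, h3', h4, ht, hneg]
  -- conclusion
  refine ⟨v.re, ?_, hv1, ?_⟩
  · have hveq : (v.re : ℂ) = v := by
      apply Complex.ext
      · simp
      · simp [hvim]
    rw [hveq, hv_def, hP_def, hDf_def]
  · have huabs : ‖u‖ = ‖S‖ := by
      simp [hu_def, norm_mul, Complex.norm_conj, hω, habs_e, habs_ζ]
    have hueq : u = ((u.re : ℝ) : ℂ) := by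
      apply Complex.ext
      · simp
      · simp [huim]
    have habs_u : ‖u‖ = |u.re| := by rw [hueq, Complex.norm_real, Real.norm_eq_abs]; simp
    calc ‖S‖ = |u.re| := by rw [← huabs, habs_u]
      _ ≤ v.re := abs_le.mpr ⟨by linarith, by linarith⟩

end Main
end

section
/- Let φ = (φ₁,φ₂) : D → G₂ be holomorphic with φ(0) = (0,0), let λ ∈ ∂D, and z₀ = (2α, α²) ∈ ∂G₂ with |α| = 1. If φ extends holomorphically to a neighborhood of λ and φ(λ) = z₀, then φ₁'(λ) = ᾱ·φ₂'(λ), and λᾱ·φ₁'(λ) is a real number with λᾱ·φ₁'(λ) ≥ 2. -/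
open Complex ComplexConjugate
open Metric

lemma key_real (A B x y : ℝ) (hA : A ≤ x) (hB : B ≤ y) (hx1 : x < 1) (hy1 : y < 1)
    (hx0 : 0 ≤ x) (hy0 : 0 ≤ y) :
    x^2*y^2 - x^2*B - y^2*A < 1 - A - B := by
  have h1 : (0:ℝ) < 1 - y^2 := by nlinarith
  have h2 : (0:ℝ) < 1 - x^2 := by nlinarith
  have h3 : 0 ≤ (x - A) * (1 - y^2) := mul_nonneg (by linarith) h1.le
  have h4 : 0 ≤ (y - B) * (1 - x^2) := mul_nonneg (by linarith) h2.le
  have h5 : 0 < (1-x)*((1-y)*(1-x*y)) := by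
    have hxy : 0 < 1 - x*y := by nlinarith
    exact mul_pos (by linarith) (mul_pos (by linarith) hxy)
  nlinarith [h3, h4, h5]

lemma disc_ineq (a b : ℂ) (ha : ‖a‖ < 1) (hb : ‖b‖ < 1) :
    ‖2*a*b - (a+b)‖ < ‖2 - (a+b)‖ := by
  have hns1 : Complex.normSq (2*a*b - (a+b))
      = 4 * Complex.normSq a * Complex.normSq b + Complex.normSq (a+b)
        - 4*(Complex.normSq a * b.re + Complex.normSq b * a.re) := by
    rw [Complex.normSq_sub]
    have hmc : 2*a*b * conj (a+b) = 2*((Complex.normSq a : ℂ) * b + (Complex.normSq b : ℂ) * a) := by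
      rw [map_add]
      linear_combination (2*b) * (Complex.mul_conj a) + (2*a) * (Complex.mul_conj b)
    rw [hmc, Complex.normSq_mul, Complex.normSq_mul]
    have h2 : Complex.normSq 2 = 4 := by simp [Complex.normSq]; norm_num
    rw [h2]
    simp [Complex.mul_re, Complex.add_re, Complex.add_im, Complex.re_ofReal_mul]
    ring
  have hns2 : Complex.normSq (2 - (a+b)) = 4 + Complex.normSq (a+b) - 4*((a+b).re) := by
    rw [Complex.normSq_sub]
    have h2 : Complex.normSq 2 = 4 := by simp [Complex.normSq]; norm_num
    rw [h2]
    have : ((2:ℂ) * conj (a+b)).re = 2 * (a+b).re := by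
      simp [Complex.mul_re]
    rw [this]
    ring
  have hkey := key_real a.re b.re (‖a‖) (‖b‖)
    (Complex.re_le_norm a) (Complex.re_le_norm b) ha hb (norm_nonneg a) (norm_nonneg b)
  have hlt : Complex.normSq (2*a*b - (a+b)) < Complex.normSq (2 - (a+b)) := by
    rw [hns1, hns2]
    have ea : Complex.normSq a = ‖a‖ ^ 2 := (Complex.sq_norm a).symm
    have eb : Complex.normSq b = ‖b‖ ^ 2 := (Complex.sq_norm b).symm
    rw [ea, eb]
    simp [Complex.add_re]
    nlinarith [hkey]
  refine lt_of_pow_lt_pow_left₀ 2 (norm_nonneg (2 - (a+b))) ?_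
  rw [Complex.sq_norm, Complex.sq_norm]
  exact hlt


set_option maxHeartbeats 2000000 in
lemma bdry (g : ℂ → ℂ) (d : ℂ)
    (hb : ∀ z : ℂ, ‖z‖ < 1 → ‖g z‖ ≤ ‖z‖)
    (lam : ℂ) (hlam : ‖lam‖ = 1)
    (hder : HasDerivAt g d lam) (hval : ‖g lam‖ = 1) :
    ∃ t : ℝ, (t : ℂ) = lam * conj (g lam) * d ∧ 1 ≤ t := by
  set A : ℂ := lam * conj (g lam) * d with hA
  have key : ∀ w : ℂ, ‖w‖ = 1 → 0 < w.re → w.re ≤ (A * w).re := by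
    intro w hw hwre
    by_contra hcon
    push_neg at hcon
    have hεpos : (0:ℝ) < w.re - (A * w).re := sub_pos.mpr hcon
    set ε : ℝ := w.re - (A * w).re with hε
    set c : ℝ := ε / 2 with hc
    have hcpos : 0 < c := by positivity
    have hlo := (hasDerivAt_iff_isLittleO.mp hder).def hcpos
    rw [Metric.eventually_nhds_iff] at hlo
    obtain ⟨r, hr, H⟩ := hlo
    set δ : ℝ := min (min (r/2) (w.re/2)) (ε/(2*(1+c^2))) with hδdef
    have hδpos : 0 < δ := by
      apply lt_min (lt_min (by linarith) (by linarith))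
      positivity
    have hδr : δ < r := lt_of_le_of_lt (le_trans (min_le_left _ _) (min_le_left _ _)) (by linarith)
    have hδw : δ ≤ w.re/2 := le_trans (min_le_left _ _) (min_le_right _ _)
    have hδε : δ ≤ ε/(2*(1+c^2)) := min_le_right _ _
    clear_value δ
    set z : ℂ := lam * (1 - (δ:ℂ) * w) with hz
    have hzl : z - lam = -((δ:ℂ) * (lam * w)) := by rw [hz]; ring
    have habsd : ‖z - lam‖ = δ := by
      rw [hzl]
      simp [map_mul, hlam, hw, abs_of_pos hδpos]
    have hnw : Complex.normSq w = 1 := by rw [Complex.normSq_eq_norm_sq, hw]; norm_num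
    have hnsz : Complex.normSq z = 1 - 2*δ*w.re + δ^2 := by
      rw [hz, Complex.normSq_mul]
      have h1 : Complex.normSq lam = 1 := by rw [Complex.normSq_eq_norm_sq, hlam]; norm_num
      rw [h1, Complex.normSq_sub]
      simp [Complex.normSq_mul, hnw, Complex.normSq_ofReal, map_mul, Complex.conj_ofReal]
      ring
    have hzb : ‖z‖ < 1 := by
      nlinarith [norm_nonneg z, Complex.sq_norm z, hnsz, hδpos, hwre]
    clear_value z
    have h2 : ‖g z‖ ≤ ‖z‖ := hb z hzb
    have hdist : dist z lam < r := by rw [Complex.dist_eq, habsd]; exact hδr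
    have h3 : ‖g z - g lam - (z - lam) * d‖ ≤ c * δ := by
      have := H hdist
      rw [smul_eq_mul] at this
      simpa [Complex.dist_eq, habsd] using this
    have h4 : ‖g lam + (z - lam) * d‖ ≤ ‖z‖ + c * δ := by
      have heq : g lam + (z - lam) * d = g z - (g z - g lam - (z - lam) * d) := by ring
      rw [heq]
      exact le_trans (norm_sub_le _ _) (add_le_add h2 h3)
    have h5 : Complex.normSq (g lam + (z - lam) * d)
        = 1 + Complex.normSq ((z - lam) * d) - 2 * (δ * (A * w).re) := by
      rw [Complex.normSq_add]
      have hgl : Complex.normSq (g lam) = 1 := by rw [Complex.normSq_eq_norm_sq, hval]; norm_num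
      rw [hgl]
      have hcc : g lam * conj ((z - lam) * d) = conj (-((δ:ℂ) * (A * w))) := by
        rw [hzl, hA]
        simp only [map_mul, map_neg, Complex.conj_ofReal, Complex.conj_conj]
        ring
      rw [hcc, Complex.conj_re]
      simp [Complex.re_ofReal_mul]
      ring
    have h6 : Complex.normSq (g lam + (z - lam) * d) ≤ (‖z‖ + c * δ)^2 := by
      rw [Complex.normSq_eq_norm_sq]
      have hnn : (0:ℝ) ≤ ‖g lam + (z - lam) * d‖ := norm_nonneg _
      nlinarith [h4]
    have h7 : (‖z‖ + c * δ)^2 ≤ 1 - 2*δ*w.re + δ^2 + 2*c*δ + c^2*δ^2 := by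
      have h8 : ‖z‖ ^ 2 = Complex.normSq z := Complex.sq_norm z
      have h9 : ‖z‖ ≤ 1 := le_of_lt hzb
      nlinarith [h8, hnsz, h9, mul_pos hcpos hδpos, norm_nonneg z]
    have hδε' : (2*(1+c^2))*δ ≤ ε := by
      rw [le_div_iff₀ (by positivity)] at hδε
      linarith
    have hns_nn : 0 ≤ Complex.normSq ((z - lam) * d) := Complex.normSq_nonneg _
    clear_value ε c
    have e0 : 1 - 2*(δ*(A*w).re) ≤ 1 - 2*δ*w.re + δ^2 + 2*c*δ + c^2*δ^2 := by
      linarith [h5, h6, h7, hns_nn]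
    have e1 : δ*ε = δ*w.re - δ*(A*w).re := by rw [hε]; ring
    have e2 : 2*c*δ = ε*δ := by rw [hc]; ring
    have e5 : δ*ε ≤ δ*((1+c^2)*δ) := by nlinarith [e0, e1, e2]
    have e3 : ε ≤ (1+c^2)*δ := le_of_mul_le_mul_left e5 hδpos
    have e4 : (1+c^2)*δ ≤ ε/2 := by linarith [hδε']
    linarith [hεpos]
  -- now derive the conclusion from key
  have h1 : 1 ≤ A.re := by
    have := key 1 (by simp) (by norm_num)
    simpa using this
  have him : A.im = 0 := by
    by_contra him0
    set t : ℝ := A.re / A.im with ht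
    set n : ℝ := ‖1 + (t:ℂ) * Complex.I‖ with hn
    have hnpos : 0 < n := by
      rw [hn]
      apply norm_pos_iff.mpr
      intro hcontra
      have := congrArg Complex.re hcontra
      simp at this
    have hw : ‖(1 + (t:ℂ) * Complex.I) / (n:ℂ)‖ = 1 := by
      rw [norm_div]
      simp only [Complex.norm_real, Real.norm_eq_abs, abs_of_pos hnpos]
      exact div_self (ne_of_gt hnpos)
    have hwre : (((1 + (t:ℂ) * Complex.I) / (n:ℂ))).re = 1 / n := by
      rw [Complex.div_ofReal_re]
      simp
    have hkey := key _ hw (by rw [hwre]; positivity)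
    rw [hwre] at hkey
    have hre2 : (A * ((1 + (t:ℂ) * Complex.I) / (n:ℂ))).re = (A.re - A.im * t)/n := by
      rw [← mul_div_assoc, Complex.div_ofReal_re]
      congr 1
      simp [Complex.mul_re]
    rw [hre2] at hkey
    have : (1:ℝ) ≤ A.re - A.im * t := by
      have h := (div_le_div_iff_of_pos_right hnpos).mp hkey
      linarith
    rw [ht] at this
    rw [mul_div_cancel₀] at this
    · linarith
    · exact him0
  refine ⟨A.re, ?_, h1⟩
  exact Complex.ext (by simp) (by simp [him])

lemma g2_ineq (ω : ℂ) (hω : ‖ω‖ = 1) (s p : ℂ) (h : (s, p) ∈ G2) :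
    ‖2*ω*p - s‖ < ‖2 - ω*s‖ := by
  obtain ⟨z₁, z₂, h1, h2, heq⟩ := h
  rw [Prod.ext_iff] at heq
  obtain ⟨hs, hp⟩ := heq
  simp only at hs hp
  have hωc : conj ω * ω = 1 := by
    rw [mul_comm, Complex.mul_conj]
    norm_cast
    rw [Complex.normSq_eq_norm_sq, hω]; norm_num
  have e1 : 2*ω*p - s = conj ω * (2*(ω*z₁)*(ω*z₂) - ((ω*z₁)+(ω*z₂))) := by
    rw [hs, hp]
    linear_combination (z₁ + z₂ - 2*ω*z₁*z₂) * hωc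
  have e2 : 2 - ω*s = 2 - ((ω*z₁)+(ω*z₂)) := by rw [hs]; ring
  rw [e1, e2, norm_mul]
  have hcω : ‖conj ω‖ = 1 := by rw [Complex.norm_conj, hω]
  rw [hcω, one_mul]
  apply disc_ineq <;> simp [map_mul, hω, h1, h2]

lemma gen_aux (α : ℂ) (hα : ‖α‖ = 1) (φ : ℂ → ℂ × ℂ)
    (hd : DifferentiableOn ℂ φ (Metric.ball (0 : ℂ) 1))
    (hmaps : Set.MapsTo φ (Metric.ball (0 : ℂ) 1) G2)
    (h0 : φ 0 = (0, 0))
    (lam : ℂ) (hlam : ‖lam‖ = 1)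
    (hφdiff : DifferentiableAt ℂ φ lam)
    (hval : φ lam = (2 * α, α ^ 2))
    (η : ℂ) (hη : ‖η‖ = 1) (hη1 : η ≠ 1) :
    ∃ t : ℝ, (t : ℂ) * (2*(1-η))
        = (1+η) * (lam * conj α * deriv (fun z => (φ z).1) lam)
          - 2*η*(lam * conj α^2 * deriv (fun z => (φ z).2) lam) ∧ 1 ≤ t := by
  have hα0 : α ≠ 0 := by intro h; rw [h] at hα; simp at hα
  have hαc : α * conj α = 1 := by
    rw [Complex.mul_conj]; norm_cast; rw [Complex.normSq_eq_norm_sq, hα]; norm_num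
  have hcinv : conj α = α⁻¹ := eq_inv_of_mul_eq_one_right hαc
  set ω : ℂ := η * conj α with hωdef
  have hω : ‖ω‖ = 1 := by
    rw [hωdef, norm_mul, Complex.norm_conj, hα, hη]; norm_num
  set g : ℂ → ℂ := fun z => (2*ω*(φ z).2 - (φ z).1) / (2 - ω*(φ z).1) with hgdef
  -- denominators don't vanish on the ball
  have hdenne : ∀ z : ℂ, ‖z‖ < 1 → 2 - ω*(φ z).1 ≠ 0 := by
    intro z hz
    have hmem : φ z ∈ G2 := hmaps (mem_ball_zero_iff.mpr hz)
    have hmem' : ((φ z).1, (φ z).2) ∈ G2 := by rwa [Prod.mk.eta]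
    have := g2_ineq ω hω (φ z).1 (φ z).2 hmem'
    intro hc
    rw [hc] at this
    simp at this
    exact absurd this (not_lt.mpr (norm_nonneg _))
  have hgd : DifferentiableOn ℂ g (ball 0 1) := by
    apply DifferentiableOn.div
    · exact (hd.snd.const_mul _).sub hd.fst
    · exact (hd.fst.const_mul ω).const_sub 2
    · intro z hz
      exact hdenne z (mem_ball_zero_iff.mp hz)
  have hgm : Set.MapsTo g (ball 0 1) (ball 0 1) := by
    intro z hz
    rw [mem_ball_zero_iff] at hz ⊢
    have hmem' : ((φ z).1, (φ z).2) ∈ G2 := by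
      rw [Prod.mk.eta]; exact hmaps (mem_ball_zero_iff.mpr (by exact hz))
    have hlt := g2_ineq ω hω (φ z).1 (φ z).2 hmem'
    have hpos : 0 < ‖2 - ω*(φ z).1‖ := lt_of_le_of_lt (norm_nonneg _) hlt
    show ‖(2*ω*(φ z).2 - (φ z).1) / (2 - ω*(φ z).1)‖ < 1
    rw [norm_div, div_lt_one hpos]
    exact hlt
  have hg0 : g 0 = 0 := by
    rw [hgdef]
    simp only [h0]
    norm_num
  have hb : ∀ z : ℂ, ‖z‖ < 1 → ‖g z‖ ≤ ‖z‖ :=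
    fun z hz => Complex.norm_le_norm_of_mapsTo_ball hgd (hgm.mono_right ball_subset_closedBall) hg0 hz
  have hη0 : (1:ℂ) - η ≠ 0 := sub_ne_zero.mpr (Ne.symm hη1)
  have hs1 : (φ lam).1 = 2*α := by rw [hval]
  have hs2 : (φ lam).2 = α^2 := by rw [hval]
  set ds := deriv (fun z => (φ z).1) lam with hds
  set dp := deriv (fun z => (φ z).2) lam with hdp
  have hsd : HasDerivAt (fun z => (φ z).1) ds lam := (hφdiff.fst).hasDerivAt
  have hpd : HasDerivAt (fun z => (φ z).2) dp lam := (hφdiff.snd).hasDerivAt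
  have hnum : HasDerivAt (fun z => 2*ω*(φ z).2 - (φ z).1) (2*ω*dp - ds) lam :=
    (hpd.const_mul _).sub hsd
  have hden : HasDerivAt (fun z => 2 - ω*(φ z).1) (-(ω*ds)) lam :=
    (hsd.const_mul ω).const_sub 2
  have hdenlam : (2 : ℂ) - ω*(φ lam).1 = 2*(1-η) := by
    rw [hs1, hωdef]
    linear_combination (-2*η) * hαc
  have hdne : (2:ℂ) - ω*(φ lam).1 ≠ 0 := by
    rw [hdenlam]; exact mul_ne_zero two_ne_zero hη0
  have hgder : HasDerivAt g
      (((2*ω*dp - ds) * (2 - ω*(φ lam).1) - (2*ω*(φ lam).2 - (φ lam).1) * -(ω*ds))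
        / (2 - ω*(φ lam).1)^2) lam := hnum.div hden hdne
  have hdne' : (2:ℂ) - ω*(2*α) ≠ 0 := by rwa [hs1] at hdne
  have hglam : g lam = -α := by
    rw [hgdef]
    simp only [hs1, hs2]
    rw [div_eq_iff hdne']
    ring
  have hgval : ‖g lam‖ = 1 := by rw [hglam]; simp [hα]
  obtain ⟨t, ht, ht1⟩ := bdry g _ hb lam hlam hgder hgval
  refine ⟨t, ?_, ht1⟩
  rw [hglam] at ht
  rw [hdenlam, hs2, hs1] at ht
  have hne2 : ((2:ℂ)*(1-η))^2 ≠ 0 := pow_ne_zero _ (mul_ne_zero two_ne_zero hη0)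
  have ht' : (t:ℂ) * (2*(1-η))^2
      = lam * conj (-α) * ((2*ω*dp - ds) * (2*(1-η)) - (2*ω*α^2 - 2*α) * -(ω*ds)) := by
    rw [ht, mul_assoc, div_mul_cancel₀ _ hne2]
  rw [map_neg, hcinv, hωdef, hcinv] at ht'
  apply mul_right_cancel₀ (b := 2*(1-η)) (mul_ne_zero two_ne_zero hη0)
  rw [show ((t:ℂ)*(2*(1-η)))*(2*(1-η)) = (t:ℂ)*(2*(1-η))^2 by ring, ht', hcinv]
  field_simp [hα0]
  ring

theorem stmt_19 (α : ℂ) (hα : ‖α‖ = 1) (φ : ℂ → ℂ × ℂ)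
    (hd : DifferentiableOn ℂ φ (Metric.ball (0 : ℂ) 1))
    (hmaps : Set.MapsTo φ (Metric.ball (0 : ℂ) 1) G2)
    (h0 : φ 0 = (0, 0))
    (lam : ℂ) (hlam : ‖lam‖ = 1)
    (hext : ∀ᶠ z in nhds lam, DifferentiableAt ℂ φ z)
    (hval : φ lam = (2 * α, α ^ 2)) :
    deriv (fun z => (φ z).1) lam = conj α * deriv (fun z => (φ z).2) lam ∧
      ∃ t : ℝ, (t : ℂ) = lam * conj α * deriv (fun z => (φ z).1) lam ∧ 2 ≤ t := by
  have hφdiff : DifferentiableAt ℂ φ lam := hext.self_of_nhds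
  set u : ℂ := lam * conj α * deriv (fun z => (φ z).1) lam with hu_def
  set v : ℂ := lam * conj α^2 * deriv (fun z => (φ z).2) lam with hv_def
  obtain ⟨t₀, h₀, h₀1⟩ := gen_aux α hα φ hd hmaps h0 lam hlam hφdiff hval (-1)
    (by simp) (by norm_num)
  obtain ⟨t₁, h₁, h₁1⟩ := gen_aux α hα φ hd hmaps h0 lam hlam hφdiff hval I
    Complex.norm_I (by intro h; simpa using congrArg Complex.im h)
  have hv : v = 2*(t₀:ℂ) := by linear_combination (-1/2 : ℂ) * h₀
  have hu : u = v + I*(v - 2*(t₁:ℂ)) := by linear_combination (-(1-I)/2) * h₁ + (u/2 - v + (t₁:ℂ))*Complex.I_sq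
  set c : ℝ := 2*t₀ - 2*t₁ with hc_def
  by_cases hc : c = 0
  · have ht01 : (t₁:ℂ) = (t₀:ℂ) := by
      have : t₁ = t₀ := by rw [hc_def] at hc; linarith
      exact_mod_cast this
    have huv : u = v := by rw [hu, hv, ht01]; ring
    have hlam0 : lam ≠ 0 := by intro h; rw [h] at hlam; simp at hlam
    have hα0 : α ≠ 0 := by intro h; rw [h] at hα; simp at hα
    have hcα0 : conj α ≠ 0 := by simpa using hα0
    constructor
    · refine mul_left_cancel₀ (mul_ne_zero hlam0 hcα0) ?_
      calc lam * conj α * deriv (fun z => (φ z).1) lam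
          = u := rfl
        _ = lam * conj α * (conj α * deriv (fun z => (φ z).2) lam) := by
            rw [huv, hv_def]; ring
    · refine ⟨2*t₀, ?_, by linarith⟩
      have hcast : ((2*t₀ : ℝ):ℂ) = 2*(t₀:ℂ) := by push_cast; ring
      rw [hcast, ← hv, ← huv]
  · exfalso
    set τ : ℝ := (2*t₀)/c with hτ_def
    have hne : (I*(τ:ℂ) + 1) ≠ 0 := by
      intro h
      have := congrArg Complex.re h
      simp at this
    set η₂ : ℂ := (I*(τ:ℂ) - 1)/(I*(τ:ℂ) + 1) with hη₂_def
    have habs : ‖η₂‖ = 1 := by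
      rw [hη₂_def, norm_div]
      have hnsq : Complex.normSq (I*(τ:ℂ) - 1) = Complex.normSq (I*(τ:ℂ) + 1) := by
        simp [Complex.normSq_apply]
      rw [Complex.norm_def, Complex.norm_def, hnsq, ← Complex.norm_def]
      exact div_self ((norm_ne_zero_iff.mpr hne))
    have hη₂1 : η₂ ≠ 1 := by
      rw [hη₂_def]
      intro h
      rw [div_eq_one_iff_eq hne] at h
      have := congrArg Complex.re h
      simp at this
      norm_num at this
    obtain ⟨t₂, h₂, h₂1⟩ := gen_aux α hα φ hd hmaps h0 lam hlam hφdiff hval η₂ habs hη₂1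
    have hη₂m : η₂ * (I*(τ:ℂ) + 1) = I*(τ:ℂ) - 1 := div_mul_cancel₀ _ hne
    have e : (t₂:ℂ)*4 = 2*I*(τ:ℂ)*u - 2*(I*(τ:ℂ) - 1)*v := by
      linear_combination (I*(τ:ℂ)+1)*h₂ + (2*(t₂:ℂ) + u - 2*v)*hη₂m
    rw [hu, hv] at e
    have hcC : (c:ℂ) = 2*(t₀:ℂ) - 2*(t₁:ℂ) := by rw [hc_def]; push_cast; ring
    have hτcC : (τ:ℂ)*(c:ℂ) = 2*(t₀:ℂ) := by
      have : τ * c = 2*t₀ := by rw [hτ_def]; exact div_mul_cancel₀ _ hc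
      exact_mod_cast this
    have hz : (t₂:ℂ)*4 = 0 := by
      linear_combination e + 2*(τ:ℂ)*hcC - 2*hτcC + (4*(τ:ℂ)*((t₀:ℂ)-(t₁:ℂ)))*Complex.I_sq
    have : t₂*4 = 0 := by exact_mod_cast hz
    linarith
end
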